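/- arXiv:1108.6015 — 5 statements merged into one kernel-verified Lean document; each statement's English description precedes it below -/
import Mathlib

section
/- For all n ≥ 1 and k ≥ 1, the number F(n,k) of rooted semilabeled trees with n non-root vertices and k labeled leaves satisfies F(n,k) = S(n, n-k+1), where S denotes the Stirling number of the second kind. -/
open Finset Polynomial

/-- Stirling number of the second kind. -/
noncomputable def Stirling (n k : ℕ) : ℕ :=
  Set.ncard {P : Finpartition (Finset.univ : Finset (Fin n)) | P.parts.card = k}

noncomputable def Bell (n : ℕ) : ℕ :=
  Set.ncard (Set.univ : Set (Finpartition (Finset.univ : Finset (Fin n))))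

noncomputable def SStar (n k : ℕ) : ℕ :=
  Set.ncard {P : Finpartition (Finset.univ : Finset (Fin n)) |
    P.parts.card = k ∧ ∀ p ∈ P.parts, 2 ≤ p.card}

noncomputable def BellStar (n : ℕ) : ℕ :=
  Set.ncard {P : Finpartition (Finset.univ : Finset (Fin n)) |
    ∀ p ∈ P.parts, 2 ≤ p.card}

structure SemiTree (n k : ℕ) where
  par : Fin (n + 1) → Fin (n + 1)
  rootFix : par (Fin.last n) = Fin.last n
  reach : ∀ v : Fin (n + 1), ∃ m : ℕ, par^[m] v = Fin.last n
  label : Fin k → Fin n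
  labelInj : Function.Injective label
  labelIsLeaf : ∀ i : Fin k, ∀ w : Fin (n + 1), w ≠ Fin.last n →
    par w ≠ (label i).castSucc
  leafIsLabeled : ∀ v : Fin n,
    (∀ w : Fin (n + 1), w ≠ Fin.last n → par w ≠ v.castSucc) → ∃ i, label i = v

/-- Isomorphism of rooted semilabeled trees: a root- and label-preserving
graph isomorphism. -/
def semiTreeIso {n k : ℕ} (T T' : SemiTree n k) : Prop :=
  ∃ σ : Fin (n + 1) ≃ Fin (n + 1), σ (Fin.last n) = Fin.last n ∧
    (∀ v, σ (T.par v) = T'.par (σ v)) ∧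
    (∀ i, σ ((T.label i).castSucc) = (T'.label i).castSucc)

/-- `Fcount n k` : the number of rooted semilabeled trees with `n` non-root vertices and
`k` labeled leaves, i.e. the number of isomorphism classes. -/
noncomputable def Fcount (n k : ℕ) : ℕ :=
  Set.ncard (Set.univ : Set (Quot (@semiTreeIso n k)))

/-- A phylogenetic tree with `n` labeled leaves and `k` unlabeled internal vertices
(one of which is the root).  The vertices `v` with `v.val < n` are the leaves,
labeled by their own index; the remaining `k` vertices are internal. -/
structure PhyloTree (n k : ℕ) where
  par : Fin (n + k) → Fin (n + k)
  root : Fin (n + k)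
  rootInternal : n ≤ root.val
  rootFix : par root = root
  reach : ∀ v : Fin (n + k), ∃ m : ℕ, par^[m] v = root
  leafNoChild : ∀ v w : Fin (n + k), v.val < n → w ≠ root → par w ≠ v
  branching : ∀ v : Fin (n + k), n ≤ v.val →
    2 ≤ (Finset.univ.filter (fun w => w ≠ root ∧ par w = v)).card

/-- Isomorphism of phylogenetic trees: a root-preserving graph isomorphism fixing
every labeled leaf. -/
def phyloTreeIso {n k : ℕ} (T T' : PhyloTree n k) : Prop :=
  ∃ σ : Fin (n + k) ≃ Fin (n + k), σ T.root = T'.root ∧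
    (∀ v : Fin (n + k), v.val < n → σ v = v) ∧
    (∀ v, σ (T.par v) = T'.par (σ v))

/-- `Tcount n k` : the number of phylogenetic trees with `n` labeled leaves and `k`
unlabeled internal vertices, i.e. the number of isomorphism classes. -/
noncomputable def Tcount (n k : ℕ) : ℕ :=
  Set.ncard (Set.univ : Set (Quot (@phyloTreeIso n k)))


namespace SemiAux

variable {n k : ℕ}

lemma fin_filter_val_card (M : ℕ) (S : ℕ → Prop) [DecidablePred S] :
    ((univ : Finset (Fin M)).filter (fun v => S v.val)).card
      = ((Finset.range M).filter S).card := by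
  apply Finset.card_bij (fun v _ => v.val)
  · intro a ha; simp only [mem_filter, mem_range] at ha ⊢; exact ⟨a.isLt, ha.2⟩
  · intro a _ b _ h; exact Fin.ext h
  · intro b hb
    simp only [mem_filter, mem_range] at hb
    exact ⟨⟨b, hb.1⟩, by simp [hb.2], rfl⟩

lemma fin_card_val_lt {M s : ℕ} (hs : s ≤ M) :
    ((univ : Finset (Fin M)).filter (fun v => v.val < s)).card = s := by
  rw [fin_filter_val_card M (fun a => a < s)]
  have : (Finset.range M).filter (fun a => a < s) = Finset.range s := by
    ext a; simp only [mem_filter, mem_range]; omega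
  rw [this, Finset.card_range]

lemma fin_card_val_gt {M t : ℕ} (ht : t < M) :
    ((univ : Finset (Fin M)).filter (fun v => t < v.val)).card = M - t - 1 := by
  rw [fin_filter_val_card M (fun a => t < a)]
  have : (Finset.range M).filter (fun a => t < a) = Finset.range M \ Finset.range (t+1) := by
    ext a; simp only [mem_filter, mem_range, mem_sdiff]; omega
  rw [this, Finset.card_sdiff_of_subset (by intro a; simp only [mem_range]; omega)]
  simp; omega

/-- a strictly monotone equiv of `Fin M` is the identity -/
lemma equiv_strictMono_id (e : Fin M ≃ Fin M) (h : ∀ v w : Fin M, v < w ↔ e v < e w) :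
    ∀ v, e v = v := by
  intro v
  have himg : (univ : Finset (Fin M)).filter (fun z => z < e v)
      = ((univ : Finset (Fin M)).filter (fun z => z < v)).image e := by
    ext z
    simp only [mem_filter, mem_image, mem_univ, true_and]
    constructor
    · intro hz
      refine ⟨e.symm z, ?_, by simp⟩
      rw [h (e.symm z) v]; simpa using hz
    · rintro ⟨a, ha, rfl⟩; exact (h a v).1 ha
  have hc : ((univ : Finset (Fin M)).filter (fun z => z < e v)).card
      = ((univ : Finset (Fin M)).filter (fun z => z < v)).card := by
    rw [himg, Finset.card_image_of_injective _ e.injective]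
  have h1 : ∀ w : Fin M, ((univ : Finset (Fin M)).filter (fun z => z < w)).card = w.val := by
    intro w
    have : ((univ : Finset (Fin M)).filter (fun z => z < w))
        = ((univ : Finset (Fin M)).filter (fun z => z.val < w.val)) := by
      ext z; simp only [mem_filter, mem_univ, true_and, Fin.lt_def]
    rw [this, fin_card_val_lt (le_of_lt w.isLt)]
  apply Fin.ext
  rw [← h1 v, ← hc, h1]



variable {n k : ℕ}

/-- parent map restricted to non-root vertices -/
def pf (T : SemiTree n k) (y : Fin n) : Fin (n + 1) := T.par y.castSucc

/-- the children of a vertex, as elements of `Fin n` -/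
def blk (T : SemiTree n k) (v : Fin (n + 1)) : Finset (Fin n) :=
  univ.filter (fun y => pf T y = v)

lemma mem_blk {T : SemiTree n k} {v : Fin (n + 1)} {y : Fin n} :
    y ∈ blk T v ↔ T.par y.castSucc = v := by rw [blk, Finset.mem_filter]; simp [pf]

noncomputable def dist (T : SemiTree n k) (v : Fin (n + 1)) : ℕ := Nat.find (T.reach v)

lemma dist_spec (T : SemiTree n k) (v : Fin (n + 1)) :
    T.par^[dist T v] v = Fin.last n := Nat.find_spec (T.reach v)

lemma dist_min {T : SemiTree n k} {v : Fin (n + 1)} {m : ℕ} (hm : m < dist T v) :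
    T.par^[m] v ≠ Fin.last n := Nat.find_min (T.reach v) hm

lemma dist_pos (T : SemiTree n k) {v : Fin (n + 1)} (hv : v ≠ Fin.last n) :
    0 < dist T v := by
  rcases Nat.eq_zero_or_pos (dist T v) with h | h
  · exact absurd (by simpa [h] using dist_spec T v) hv
  · exact h

lemma dist_parent {T : SemiTree n k} {v : Fin (n + 1)} (hv : v ≠ Fin.last n) :
    dist T (T.par v) + 1 = dist T v := by
  have hpos := dist_pos T hv
  have h1 : T.par^[dist T v - 1] (T.par v) = Fin.last n := by
    have h0 : T.par^[dist T v - 1 + 1] v = Fin.last n := by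
      rw [(by omega : dist T v - 1 + 1 = dist T v)]; exact dist_spec T v
    rw [Function.iterate_succ_apply] at h0; exact h0
  have h2 : dist T (T.par v) ≤ dist T v - 1 := Nat.find_le h1
  have h3 : dist T v ≤ dist T (T.par v) + 1 := by
    apply Nat.find_le
    rw [Function.iterate_succ_apply]
    exact dist_spec T (T.par v)
  omega

lemma dist_le (T : SemiTree n k) (v : Fin (n + 1)) : dist T v ≤ n := by
  by_contra h
  push_neg at h
  have key : ∀ i j : ℕ, i < j → j ≤ dist T v → T.par^[i] v = T.par^[j] v → False := by
    intro i j hlt hj hij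
    have : T.par^[dist T v - j + i] v = Fin.last n := by
      calc T.par^[dist T v - j + i] v
          = T.par^[dist T v - j] (T.par^[i] v) := Function.iterate_add_apply _ _ _ _
        _ = T.par^[dist T v - j] (T.par^[j] v) := by rw [hij]
        _ = T.par^[dist T v - j + j] v := (Function.iterate_add_apply _ _ _ _).symm
        _ = Fin.last n := by
            rw [(by omega : dist T v - j + j = dist T v)]; exact dist_spec T v
    exact dist_min (by omega) this
  have hinj : Function.Injective (fun i : Fin (dist T v + 1) => T.par^[i.val] v) := by
    intro i j hij
    simp only at hij
    rcases Nat.lt_trichotomy i.val j.val with h' | h' | h'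
    · exact absurd hij (fun hh => key i.val j.val h' (by omega) hh)
    · exact Fin.ext h'
    · exact absurd hij.symm (fun hh => key j.val i.val h' (by omega) hh)
  have := Fintype.card_le_of_injective _ hinj
  simp at this; omega

lemma dist_child {T : SemiTree n k} {v : Fin (n + 1)} {y : Fin n} (hy : y ∈ blk T v) :
    dist T y.castSucc = dist T v + 1 := by
  have h1 : T.par y.castSucc = v := mem_blk.1 hy
  have := dist_parent (v := y.castSucc) (T := T) (Fin.castSucc_lt_last y).ne
  rw [h1] at this; omega

lemma blk_root_nonempty (T : SemiTree n k) (hn : 1 ≤ n) :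
    (blk T (Fin.last n)).Nonempty := by
  have h0 : (⟨0, by omega⟩ : Fin (n+1)) ≠ Fin.last n := by
    intro h
    have := congrArg Fin.val h
    simp [Fin.last] at this; omega
  set v : Fin (n+1) := ⟨0, by omega⟩
  have hpos := dist_pos T h0
  set m := dist T v
  have hw : T.par (T.par^[m-1] v) = Fin.last n := by
    have h0 : T.par^[m - 1 + 1] v = Fin.last n := by
      rw [(by omega : m - 1 + 1 = m)]; exact dist_spec T v
    rw [Function.iterate_succ_apply'] at h0; exact h0
  have hwne : T.par^[m-1] v ≠ Fin.last n := dist_min (by omega)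
  obtain ⟨y, hy⟩ := Fin.exists_castSucc_eq.2 hwne
  exact ⟨y, mem_blk.2 (by rw [hy]; exact hw)⟩

lemma blk_empty_iff {T : SemiTree n k} {v : Fin n} :
    blk T v.castSucc = ∅ ↔ ∃ i, T.label i = v := by
  constructor
  · intro h
    apply T.leafIsLabeled
    intro w hw hpar
    obtain ⟨y, hy⟩ := Fin.exists_castSucc_eq.2 hw
    have : y ∈ blk T v.castSucc := mem_blk.2 (by rw [hy]; exact hpar)
    simp [h] at this
  · rintro ⟨i, rfl⟩
    rw [Finset.eq_empty_iff_forall_notMem]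
    intro y hy
    exact T.labelIsLeaf i y.castSucc (Fin.castSucc_lt_last y).ne (mem_blk.1 hy)

noncomputable def leafIdx (T : SemiTree n k) (v : Fin (n + 1)) : ℕ :=
  if h : ∃ i, (T.label i).castSucc = v then h.choose.val else 0

noncomputable def nu (T : SemiTree n k) (v : Fin (n + 1)) : ℕ :=
  if h : (blk T v).Nonempty then
    ((blk T v).attach.image (fun y => nu T y.1.castSucc)).max'
      (by rwa [Finset.image_nonempty, Finset.attach_nonempty_iff]) + (k + 1)
  else leafIdx T v + 1
termination_by n - dist T v
decreasing_by
  all_goals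
    have h1 := dist_child y.2
    have h2 := dist_le T y.1.castSucc
    omega

lemma nu_of_leaf {T : SemiTree n k} {v : Fin (n + 1)} (h : blk T v = ∅) :
    nu T v = leafIdx T v + 1 := by
  rw [nu]; simp [h]

lemma nu_child_le {T : SemiTree n k} {v : Fin (n + 1)} {y : Fin n} (hy : y ∈ blk T v) :
    nu T y.castSucc + (k + 1) ≤ nu T v := by
  conv_rhs => rw [nu]
  rw [dif_pos ⟨y, hy⟩]
  have hmem : nu T y.castSucc ∈ (blk T v).attach.image (fun y => nu T y.1.castSucc) :=
    Finset.mem_image.2 ⟨⟨y, hy⟩, Finset.mem_attach _ _, rfl⟩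
  exact Nat.add_le_add_right (Finset.le_max' _ _ hmem) _

lemma nu_exists_eq {T : SemiTree n k} {v : Fin (n + 1)} (h : (blk T v).Nonempty) :
    ∃ y ∈ blk T v, nu T v = nu T y.castSucc + (k + 1) := by
  have hne : ((blk T v).attach.image (fun y => nu T y.1.castSucc)).Nonempty := by
    rwa [Finset.image_nonempty, Finset.attach_nonempty_iff]
  obtain ⟨y, -, hy2⟩ := Finset.mem_image.1 (Finset.max'_mem _ hne)
  refine ⟨y.1, y.2, ?_⟩
  rw [nu, dif_pos h, hy2]

lemma nu_gt_k {T : SemiTree n k} {v : Fin (n + 1)} (h : (blk T v).Nonempty) :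
    k + 1 ≤ nu T v := by
  obtain ⟨y, -, hy⟩ := nu_exists_eq h
  omega

lemma nu_leaf {T : SemiTree n k} {u : Fin n} {i : Fin k} (hl : T.label i = u)
    (h : blk T u.castSucc = ∅) : nu T u.castSucc = i.val + 1 := by
  rw [nu_of_leaf h, leafIdx]
  have hex : ∃ i', (T.label i').castSucc = u.castSucc := ⟨i, by rw [hl]⟩
  rw [dif_pos hex]
  have := hex.choose_spec
  have h2 : T.label hex.choose = u := Fin.castSucc_injective _ this
  rw [T.labelInj (h2.trans hl.symm)]

lemma nu_le_k {T : SemiTree n k} {v : Fin (n + 1)} (hn : 1 ≤ n) (h : blk T v = ∅) :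
    nu T v ≤ k := by
  have hvr : v ≠ Fin.last n := by
    intro hv; rw [hv] at h
    exact absurd h (blk_root_nonempty T hn).ne_empty
  obtain ⟨u, rfl⟩ := Fin.exists_castSucc_eq.2 hvr
  obtain ⟨i, hi⟩ := blk_empty_iff.1 h
  rw [nu_leaf hi h]
  omega

lemma nu_pos {T : SemiTree n k} (v : Fin (n + 1)) : 1 ≤ nu T v := by
  rcases (blk T v).eq_empty_or_nonempty with h | h
  · rw [nu_of_leaf h]; omega
  · have := nu_gt_k h; omega

lemma nu_inj (T : SemiTree n k) (hn : 1 ≤ n) : Function.Injective (nu T) := by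
  suffices h : ∀ N v w, nu T v ≤ N → nu T v = nu T w → v = w by
    intro v w h'; exact h (nu T v) v w le_rfl h'
  intro N
  induction N using Nat.strong_induction_on with
  | _ N IH =>
  intro v w hle heq
  rcases (blk T v).eq_empty_or_nonempty with hv | hv <;>
    rcases (blk T w).eq_empty_or_nonempty with hw | hw
  · have hvr : v ≠ Fin.last n := by
      intro hv'; rw [hv'] at hv; exact absurd hv (blk_root_nonempty T hn).ne_empty
    have hwr : w ≠ Fin.last n := by
      intro hw'; rw [hw'] at hw; exact absurd hw (blk_root_nonempty T hn).ne_empty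
    obtain ⟨u, rfl⟩ := Fin.exists_castSucc_eq.2 hvr
    obtain ⟨u', rfl⟩ := Fin.exists_castSucc_eq.2 hwr
    obtain ⟨i, hi⟩ := blk_empty_iff.1 hv
    obtain ⟨j, hj⟩ := blk_empty_iff.1 hw
    rw [nu_leaf hi hv, nu_leaf hj hw] at heq
    have : i = j := Fin.ext (by omega)
    subst this
    rw [← hi, hj]
  · have h1 := nu_le_k hn hv
    have h2 := nu_gt_k hw
    omega
  · have h1 := nu_le_k hn hw
    have h2 := nu_gt_k hv
    omega
  · obtain ⟨y, hy, hy2⟩ := nu_exists_eq hv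
    obtain ⟨z, hz, hz2⟩ := nu_exists_eq hw
    have hk1 : nu T y.castSucc = nu T z.castSucc := by omega
    have hlt : nu T y.castSucc < N := by
      have := nu_pos (T := T) z.castSucc
      omega
    have := IH (nu T y.castSucc) hlt y.castSucc z.castSucc le_rfl hk1
    have hyz : y = z := Fin.castSucc_injective _ this
    subst hyz
    rw [← mem_blk.1 hy, ← mem_blk.1 hz]

lemma nu_lt_root (T : SemiTree n k) (hn : 1 ≤ n) :
    ∀ v, v ≠ Fin.last n → nu T v < nu T (Fin.last n) := by
  suffices h : ∀ d v, dist T v ≤ d → v ≠ Fin.last n → nu T v < nu T (Fin.last n) by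
    intro v hv; exact h (dist T v) v le_rfl hv
  intro d
  induction d with
  | zero =>
    intro v hd hv
    have := dist_spec T v
    rw [Nat.le_zero.1 hd] at this
    exact absurd this hv
  | succ d IH =>
    intro v hd hv
    obtain ⟨y, rfl⟩ := Fin.exists_castSucc_eq.2 hv
    have hmem : y ∈ blk T (T.par y.castSucc) := mem_blk.2 rfl
    have hstep : nu T y.castSucc < nu T (T.par y.castSucc) := by
      have := nu_child_le hmem; omega
    by_cases hp : T.par y.castSucc = Fin.last n
    · rwa [hp] at hstep
    · have hdp : dist T (T.par y.castSucc) ≤ d := by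
        have := dist_parent (T := T) (v := y.castSucc) hv
        omega
      exact hstep.trans (IH _ hdp hp)

noncomputable def rkv (T : SemiTree n k) (v : Fin (n + 1)) : ℕ :=
  (univ.filter (fun w => nu T w < nu T v)).card

lemma rkv_le (T : SemiTree n k) (v : Fin (n + 1)) : rkv T v ≤ n := by
  have hsub : (univ.filter (fun w => nu T w < nu T v)) ⊆ univ.erase v := by
    intro w hw
    simp only [mem_filter, mem_univ, true_and] at hw
    simp only [mem_erase, mem_univ, and_true]
    intro h; rw [h] at hw; omega
  have := Finset.card_le_card hsub
  rwa [Finset.card_erase_of_mem (mem_univ v), Finset.card_univ, Fintype.card_fin,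
    Nat.add_sub_cancel] at this

lemma rkv_lt_rkv {T : SemiTree n k} {v w : Fin (n + 1)} (h : nu T v < nu T w) :
    rkv T v < rkv T w := by
  apply Finset.card_lt_card
  constructor
  · intro x hx
    simp only [mem_filter, mem_univ, true_and] at hx ⊢
    omega
  · intro hsub
    have := hsub (by simp only [mem_filter, mem_univ, true_and]; exact h)
    simp only [mem_filter, mem_univ, true_and] at this
    omega

noncomputable def sig (T : SemiTree n k) (hn : 1 ≤ n) : Fin (n + 1) ≃ Fin (n + 1) :=
  Equiv.ofBijective (fun v => ⟨rkv T v, by have := rkv_le T v; omega⟩)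
    (by
      apply Finite.injective_iff_bijective.1
      intro v w h
      by_contra hne
      have hnu : nu T v ≠ nu T w := fun h' => hne (nu_inj T hn h')
      have hval : rkv T v = rkv T w := congrArg Fin.val h
      rcases Nat.lt_or_ge (nu T v) (nu T w) with h' | h'
      · exact absurd hval (Nat.ne_of_lt (rkv_lt_rkv h'))
      · exact absurd hval.symm (Nat.ne_of_lt (rkv_lt_rkv (by omega))))

lemma sig_val (T : SemiTree n k) (hn : 1 ≤ n) (v : Fin (n + 1)) :
    (sig T hn v).val = rkv T v := rfl

lemma sig_lt_iff {T : SemiTree n k} (hn : 1 ≤ n) {v w : Fin (n + 1)} :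
    sig T hn v < sig T hn w ↔ nu T v < nu T w := by
  constructor
  · intro h
    by_contra h'
    push_neg at h'
    rcases Nat.eq_or_lt_of_le h' with h'' | h''
    · have : v = w := nu_inj T hn h''.symm
      subst this; exact lt_irrefl _ h
    · have := rkv_lt_rkv h''
      rw [Fin.lt_def, sig_val, sig_val] at h
      omega
  · intro h
    rw [Fin.lt_def, sig_val, sig_val]
    exact rkv_lt_rkv h

lemma sig_root (T : SemiTree n k) (hn : 1 ≤ n) :
    sig T hn (Fin.last n) = Fin.last n := by
  have hmax : ∀ w, sig T hn w ≤ sig T hn (Fin.last n) := by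
    intro w
    by_cases hw : w = Fin.last n
    · subst hw; exact le_rfl
    · exact le_of_lt ((sig_lt_iff hn).2 (nu_lt_root T hn w hw))
  obtain ⟨u, hu⟩ := (sig T hn).surjective (Fin.last n)
  exact le_antisymm (Fin.le_last _) (hu ▸ hmax u)

lemma sig_symm_root (T : SemiTree n k) (hn : 1 ≤ n) :
    (sig T hn).symm (Fin.last n) = Fin.last n := by
  rw [Equiv.symm_apply_eq, sig_root]

lemma sig_leaf (T : SemiTree n k) (hn : 1 ≤ n) (hkn : k ≤ n) (i : Fin k) :
    sig T hn ((T.label i).castSucc) = ⟨i.val, by have := i.isLt; omega⟩ := by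
  apply Fin.ext
  rw [sig_val]
  have hblk : blk T (T.label i).castSucc = ∅ := blk_empty_iff.2 ⟨i, rfl⟩
  have hnu : nu T (T.label i).castSucc = i.val + 1 := nu_leaf rfl hblk
  show (univ.filter (fun w => nu T w < nu T (T.label i).castSucc)).card = i.val
  have hcard : (univ.filter (fun w => nu T w < nu T (T.label i).castSucc)).card
      = ((univ : Finset (Fin k)).filter (fun j => j.val < i.val)).card := by
    symm
    apply Finset.card_bij (fun j _ => (T.label j).castSucc)
    · intro j hj
      simp only [mem_filter, mem_univ, true_and] at hj ⊢
      have hblkj : blk T (T.label j).castSucc = ∅ := blk_empty_iff.2 ⟨j, rfl⟩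
      rw [nu_leaf rfl hblkj, hnu]
      omega
    · intro a _ b _ hab
      exact T.labelInj (Fin.castSucc_injective _ hab)
    · intro w hw
      simp only [mem_filter, mem_univ, true_and] at hw
      have hwk : nu T w ≤ k := by
        have : i.val + 1 ≤ k := i.isLt
        rw [hnu] at hw; omega
      have hblkw : blk T w = ∅ := by
        rcases (blk T w).eq_empty_or_nonempty with h | h
        · exact h
        · have := nu_gt_k h; omega
      have hwr : w ≠ Fin.last n := by
        intro h; rw [h] at hblkw
        exact absurd hblkw (blk_root_nonempty T hn).ne_empty
      obtain ⟨u, rfl⟩ := Fin.exists_castSucc_eq.2 hwr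
      obtain ⟨j, hj⟩ := blk_empty_iff.1 hblkw
      refine ⟨j, ?_, by rw [hj]⟩
      simp only [mem_filter, mem_univ, true_and]
      rw [nu_leaf hj hblkw, hnu] at hw
      omega
  rw [hcard, fin_card_val_lt (le_of_lt i.isLt)]

noncomputable def cpar (T : SemiTree n k) (hn : 1 ≤ n) : Fin (n + 1) → Fin (n + 1) :=
  fun w => sig T hn (T.par ((sig T hn).symm w))

lemma cpar_iterate (T : SemiTree n k) (hn : 1 ≤ n) (m : ℕ) (x : Fin (n + 1)) :
    (cpar T hn)^[m] (sig T hn x) = sig T hn (T.par^[m] x) := by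
  induction m generalizing x with
  | zero => simp
  | succ m IH =>
    rw [Function.iterate_succ_apply, Function.iterate_succ_apply]
    rw [show cpar T hn (sig T hn x) = sig T hn (T.par x) by
      rw [cpar, Equiv.symm_apply_apply]]
    exact IH (T.par x)

noncomputable def canon (T : SemiTree n k) (hn : 1 ≤ n) (hkn : k ≤ n) : SemiTree n k where
  par := cpar T hn
  rootFix := by
    rw [cpar, sig_symm_root, T.rootFix, sig_root]
  reach := by
    intro w
    refine ⟨dist T ((sig T hn).symm w), ?_⟩
    have := cpar_iterate T hn (dist T ((sig T hn).symm w)) ((sig T hn).symm w)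
    rw [Equiv.apply_symm_apply] at this
    rw [this, dist_spec, sig_root]
  label := fun i => ⟨i.val, lt_of_lt_of_le i.isLt hkn⟩
  labelInj := by
    intro i j h
    simp only [Fin.mk.injEq] at h
    exact Fin.ext h
  labelIsLeaf := by
    intro i w hw hpar
    have hcast : ((⟨i.val, lt_of_lt_of_le i.isLt hkn⟩ : Fin n).castSucc : Fin (n+1))
        = ⟨i.val, by have := i.isLt; omega⟩ := rfl
    rw [cpar, hcast, ← sig_leaf T hn hkn i] at hpar
    have h2 := (sig T hn).injective hpar
    have hwr : (sig T hn).symm w ≠ Fin.last n := by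
      intro h
      rw [← sig_symm_root T hn] at h
      exact hw ((sig T hn).symm.injective h)
    exact T.labelIsLeaf i _ hwr h2
  leafIsLabeled := by
    intro v h
    set u := (sig T hn).symm v.castSucc with hu
    have hur : u ≠ Fin.last n := by
      intro h'
      rw [hu, ← sig_symm_root T hn] at h'
      have := (sig T hn).symm.injective h'
      exact absurd this (Fin.castSucc_lt_last v).ne
    have hblku : blk T u = ∅ := by
      rw [Finset.eq_empty_iff_forall_notMem]
      intro y hy
      have hyu : T.par y.castSucc = u := mem_blk.1 hy
      have hwne : sig T hn y.castSucc ≠ Fin.last n := by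
        intro h'
        rw [← sig_root T hn] at h'
        have := (sig T hn).injective h'
        exact absurd this (Fin.castSucc_lt_last y).ne
      apply h (sig T hn y.castSucc) hwne
      rw [cpar, Equiv.symm_apply_apply, hyu, hu, Equiv.apply_symm_apply]
    obtain ⟨z, hz⟩ := Fin.exists_castSucc_eq.2 hur
    obtain ⟨j, hj⟩ := blk_empty_iff.1 (by rw [hz]; exact hblku)
    have hsigu : sig T hn u = v.castSucc := by rw [hu, Equiv.apply_symm_apply]
    rw [← hz, ← hj, sig_leaf T hn hkn j] at hsigu
    refine ⟨j, Fin.ext ?_⟩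
    have := congrArg Fin.val hsigu
    simpa using this

lemma canon_iso (T : SemiTree n k) (hn : 1 ≤ n) (hkn : k ≤ n) :
    semiTreeIso T (canon T hn hkn) := by
  refine ⟨sig T hn, sig_root T hn, ?_, ?_⟩
  · intro v
    show sig T hn (T.par v) = cpar T hn (sig T hn v)
    rw [cpar, Equiv.symm_apply_apply]
  · intro i
    rw [sig_leaf T hn hkn i]
    rfl

section Iso

variable {T T' : SemiTree n k} {σ : Fin (n + 1) ≃ Fin (n + 1)}

lemma iso_ne_last (hroot : σ (Fin.last n) = Fin.last n) (y : Fin n) :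
    σ y.castSucc ≠ Fin.last n := fun h =>
  (Fin.castSucc_lt_last y).ne (σ.injective (h.trans hroot.symm))

noncomputable def tau (σ : Fin (n + 1) ≃ Fin (n + 1)) (hroot : σ (Fin.last n) = Fin.last n) :
    Fin n → Fin n := fun y => (σ y.castSucc).castPred (iso_ne_last hroot y)

lemma castSucc_tau (hroot : σ (Fin.last n) = Fin.last n) (y : Fin n) :
    (tau σ hroot y).castSucc = σ y.castSucc := Fin.castSucc_castPred _ _

lemma blk_iso (hroot : σ (Fin.last n) = Fin.last n)
    (hpar : ∀ v, σ (T.par v) = T'.par (σ v)) (v : Fin (n + 1)) :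
    blk T' (σ v) = (blk T v).image (tau σ hroot) := by
  ext z
  simp only [Finset.mem_image]
  constructor
  · intro hz
    have hz' : T'.par z.castSucc = σ v := mem_blk.1 hz
    have hx : σ.symm z.castSucc ≠ Fin.last n := by
      intro h
      have : z.castSucc = σ (Fin.last n) := by rw [← h, Equiv.apply_symm_apply]
      rw [hroot] at this
      exact (Fin.castSucc_lt_last z).ne this
    obtain ⟨y, hy⟩ := Fin.exists_castSucc_eq.2 hx
    have hyz : σ y.castSucc = z.castSucc := by rw [hy, Equiv.apply_symm_apply]
    refine ⟨y, mem_blk.2 ?_, ?_⟩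
    · have := hpar y.castSucc
      rw [hyz, hz'] at this
      exact σ.injective (by rw [this])
    · apply Fin.castSucc_injective
      rw [castSucc_tau, hyz]
  · rintro ⟨y, hy, rfl⟩
    apply mem_blk.2
    show T'.par (tau σ hroot y).castSucc = σ v
    rw [castSucc_tau, ← hpar, mem_blk.1 hy]

lemma nu_iso (hn : 1 ≤ n) (hroot : σ (Fin.last n) = Fin.last n)
    (hpar : ∀ v, σ (T.par v) = T'.par (σ v))
    (hlab : ∀ i, σ ((T.label i).castSucc) = (T'.label i).castSucc) :
    ∀ v, nu T' (σ v) = nu T v := by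
  suffices h : ∀ d v, n - dist T v ≤ d → nu T' (σ v) = nu T v by
    intro v; exact h n v (by omega)
  intro d
  induction d using Nat.strong_induction_on with
  | _ d IH =>
  intro v hd
  rcases (blk T v).eq_empty_or_nonempty with hv | hv
  · have hblk' : blk T' (σ v) = ∅ := by rw [blk_iso hroot hpar, hv]; simp
    have hvr : v ≠ Fin.last n := by
      intro h; rw [h] at hv; exact absurd hv (blk_root_nonempty T hn).ne_empty
    obtain ⟨u, rfl⟩ := Fin.exists_castSucc_eq.2 hvr
    obtain ⟨i, hi⟩ := blk_empty_iff.1 hv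
    rw [nu_leaf hi hv]
    rw [← hi, hlab i]
    rw [nu_leaf rfl (by rw [← hi] at hblk'; rw [hlab i] at hblk'; exact hblk')]
  · -- nonleaf case
    have hdist : ∀ y ∈ blk T v, n - dist T y.castSucc ≤ d - 1 ∧ d ≥ 1 := by
      intro y hy
      have h1 := dist_child hy
      have h2 := dist_le T y.castSucc
      constructor <;> omega
    have hIH : ∀ y ∈ blk T v, nu T' (σ y.castSucc) = nu T y.castSucc := by
      intro y hy
      obtain ⟨h1, h2⟩ := hdist y hy
      exact IH (d - 1) (by omega) y.castSucc h1
    have hne' : (blk T' (σ v)).Nonempty := by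
      rw [blk_iso hroot hpar]
      exact hv.image _
    apply le_antisymm
    · obtain ⟨z, hz, hz2⟩ := nu_exists_eq hne'
      rw [blk_iso hroot hpar] at hz
      obtain ⟨y, hy, rfl⟩ := Finset.mem_image.1 hz
      rw [hz2]
      have : nu T' (tau σ hroot y).castSucc = nu T y.castSucc := by
        rw [castSucc_tau]; exact hIH y hy
      rw [this]
      exact nu_child_le hy
    · obtain ⟨y, hy, hy2⟩ := nu_exists_eq hv
      rw [hy2, ← hIH y hy, ← castSucc_tau hroot]
      apply nu_child_le
      rw [blk_iso hroot hpar]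
      exact Finset.mem_image_of_mem _ hy

end Iso

lemma nu_canon (T : SemiTree n k) (hn : 1 ≤ n) (hkn : k ≤ n) (v : Fin (n + 1)) :
    nu (canon T hn hkn) (sig T hn v) = nu T v := by
  refine nu_iso hn (sig_root T hn) ?_ ?_ v
  · intro x
    show sig T hn (T.par x) = cpar T hn (sig T hn x)
    rw [cpar, Equiv.symm_apply_apply]
  · intro i
    rw [sig_leaf T hn hkn i]
    rfl

lemma sorted_canon (T : SemiTree n k) (hn : 1 ≤ n) (hkn : k ≤ n) :
    ∀ v w, v < w ↔ nu (canon T hn hkn) v < nu (canon T hn hkn) w := by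
  intro v w
  have hv : v = sig T hn ((sig T hn).symm v) := (Equiv.apply_symm_apply _ _).symm
  have hw : w = sig T hn ((sig T hn).symm w) := (Equiv.apply_symm_apply _ _).symm
  rw [hv, hw, nu_canon, nu_canon, sig_lt_iff hn]

def bmax (X : SemiTree n k) (v : Fin (n + 1)) : ℕ := (blk X v).sup Fin.val

def IsCanon (X : SemiTree n k) : Prop :=
  (∀ i : Fin k, (X.label i).val = i.val) ∧
  (∀ v w : Fin (n + 1), (blk X v).Nonempty → (blk X w).Nonempty → v < w →
    bmax X v < bmax X w)

lemma bmax_spec {X : SemiTree n k} {v : Fin (n + 1)} (h : (blk X v).Nonempty) :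
    ∃ y ∈ blk X v, y.val = bmax X v ∧ ∀ z ∈ blk X v, z.val ≤ y.val := by
  obtain ⟨y, hy, hmax⟩ := Finset.exists_max_image (blk X v) Fin.val h
  refine ⟨y, hy, le_antisymm (Finset.le_sup hy) (Finset.sup_le hmax), hmax⟩

lemma mono_of_sorted {X : SemiTree n k}
    (hs : ∀ v w, v < w ↔ nu X v < nu X w) :
    ∀ v w : Fin (n + 1), (blk X v).Nonempty → (blk X w).Nonempty → v < w →
      bmax X v < bmax X w := by
  have hmaxnu : ∀ v (h : (blk X v).Nonempty), ∃ y ∈ blk X v,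
      y.val = bmax X v ∧ nu X v = nu X y.castSucc + (k + 1) := by
    intro v h
    obtain ⟨y, hy, hbm, hmax⟩ := bmax_spec h
    refine ⟨y, hy, hbm, le_antisymm ?_ (nu_child_le hy)⟩
    obtain ⟨y₀, hy₀, hy₀2⟩ := nu_exists_eq h
    rw [hy₀2]
    have : nu X y₀.castSucc ≤ nu X y.castSucc := by
      rcases eq_or_lt_of_le (hmax y₀ hy₀) with h' | h'
      · rw [Fin.ext h']
      · exact le_of_lt ((hs _ _).1 (by rwa [Fin.castSucc_lt_castSucc_iff, Fin.lt_def]))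
    omega
  intro v w hv hw hvw
  obtain ⟨y, _, hby, hnuy⟩ := hmaxnu v hv
  obtain ⟨z, _, hbz, hnuz⟩ := hmaxnu w hw
  have h1 : nu X v < nu X w := (hs _ _).1 hvw
  have h2 : nu X y.castSucc < nu X z.castSucc := by omega
  have h3 : y.castSucc < z.castSucc := by
    by_contra h'
    push_neg at h'
    rcases eq_or_lt_of_le h' with h'' | h''
    · rw [h''] at h2; omega
    · have := (hs _ _).1 h''; omega
  rw [← hby, ← hbz]
  exact h3

lemma isCanon_canon (T : SemiTree n k) (hn : 1 ≤ n) (hkn : k ≤ n) :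
    IsCanon (canon T hn hkn) := by
  constructor
  · intro i; rfl
  · exact mono_of_sorted (sorted_canon T hn hkn)

lemma canon_blk_empty_iff {X : SemiTree n k} (hlab : ∀ i : Fin k, (X.label i).val = i.val)
    (u : Fin n) : blk X u.castSucc = ∅ ↔ u.val < k := by
  constructor
  · intro h
    obtain ⟨i, hi⟩ := blk_empty_iff.1 h
    rw [← hi, hlab i]
    exact i.isLt
  · intro h
    exact blk_empty_iff.2 ⟨⟨u.val, h⟩, Fin.ext (hlab ⟨u.val, h⟩)⟩

lemma canon_nu_leaf {X : SemiTree n k} (hlab : ∀ i : Fin k, (X.label i).val = i.val)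
    {u : Fin n} (h : u.val < k) : nu X u.castSucc = u.val + 1 :=
  nu_leaf (Fin.ext (hlab ⟨u.val, h⟩)) ((canon_blk_empty_iff hlab u).2 h)

lemma csorted {X : SemiTree n k} (hn : 1 ≤ n) (hX : IsCanon X) :
    ∀ v w : Fin (n + 1), v < w → nu X v < nu X w := by
  obtain ⟨hlab, hmono⟩ := hX
  suffices h : ∀ N (v w : Fin (n + 1)), nu X v ≤ N → nu X w ≤ N → v < w → nu X v < nu X w by
    intro v w hvw
    exact h (max (nu X v) (nu X w)) v w (le_max_left _ _) (le_max_right _ _) hvw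
  intro N
  induction N using Nat.strong_induction_on with
  | _ N IH =>
  intro v w hvN hwN hvw
  rcases (blk X v).eq_empty_or_nonempty with hv | hv
  · have hvr : v ≠ Fin.last n := by
      intro h; rw [h] at hv; exact absurd hv (blk_root_nonempty X hn).ne_empty
    obtain ⟨u, rfl⟩ := Fin.exists_castSucc_eq.2 hvr
    have hu : u.val < k := (canon_blk_empty_iff hlab u).1 hv
    rw [canon_nu_leaf hlab hu]
    rcases (blk X w).eq_empty_or_nonempty with hw | hw
    · have hwr : w ≠ Fin.last n := by
        intro h; rw [h] at hw; exact absurd hw (blk_root_nonempty X hn).ne_empty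
      obtain ⟨u', rfl⟩ := Fin.exists_castSucc_eq.2 hwr
      have hu' : u'.val < k := (canon_blk_empty_iff hlab u').1 hw
      rw [canon_nu_leaf hlab hu']
      rw [Fin.castSucc_lt_castSucc_iff, Fin.lt_def] at hvw
      omega
    · have := nu_gt_k hw
      omega
  · rcases (blk X w).eq_empty_or_nonempty with hw | hw
    · exfalso
      have hwr : w ≠ Fin.last n := by
        intro h; rw [h] at hw; exact absurd hw (blk_root_nonempty X hn).ne_empty
      obtain ⟨u', rfl⟩ := Fin.exists_castSucc_eq.2 hwr
      have hu' : u'.val < k := (canon_blk_empty_iff hlab u').1 hw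
      have hvr : v ≠ Fin.last n := by
        intro h
        rw [h] at hvw
        exact absurd hvw (not_lt.2 (Fin.le_last _))
      obtain ⟨u, rfl⟩ := Fin.exists_castSucc_eq.2 hvr
      rw [Fin.castSucc_lt_castSucc_iff, Fin.lt_def] at hvw
      have hu : u.val < k := by omega
      exact hv.ne_empty ((canon_blk_empty_iff hlab u).2 hu)
    · -- both nonleaf
      have hNk : k + 1 ≤ N := le_trans (nu_gt_k hv) hvN
      have hmaxnu : ∀ (x : Fin (n+1)) (h : (blk X x).Nonempty), nu X x ≤ N → ∃ y ∈ blk X x,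
          y.val = bmax X x ∧ nu X x = nu X y.castSucc + (k + 1) := by
        intro x h hxN
        obtain ⟨y, hy, hbm, hmax⟩ := bmax_spec h
        refine ⟨y, hy, hbm, le_antisymm ?_ (nu_child_le hy)⟩
        obtain ⟨y₀, hy₀, hy₀2⟩ := nu_exists_eq h
        rw [hy₀2]
        have hle : nu X y₀.castSucc ≤ nu X y.castSucc := by
          rcases eq_or_lt_of_le (hmax y₀ hy₀) with h' | h'
          · rw [Fin.ext h']
          · have hc0 := nu_child_le hy₀
            have hc1 := nu_child_le hy
            apply le_of_lt
            apply IH (N - (k+1)) (by omega) _ _ (by omega) (by omega)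
            rwa [Fin.castSucc_lt_castSucc_iff, Fin.lt_def]
        omega
      obtain ⟨y, hy, hby, hnuy⟩ := hmaxnu v hv hvN
      obtain ⟨z, hz, hbz, hnuz⟩ := hmaxnu w hw hwN
      have hbb : bmax X v < bmax X w := hmono v w hv hw hvw
      have hyz : y.castSucc < z.castSucc := by
        rw [Fin.castSucc_lt_castSucc_iff, Fin.lt_def]
        omega
      have hc0 := nu_child_le hy
      have hc1 := nu_child_le hz
      have := IH (N - (k+1)) (by omega) y.castSucc z.castSucc (by omega) (by omega) hyz
      omega

lemma csorted_iff {X : SemiTree n k} (hn : 1 ≤ n) (hX : IsCanon X) :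
    ∀ v w : Fin (n + 1), v < w ↔ nu X v < nu X w := by
  intro v w
  constructor
  · exact csorted hn hX v w
  · intro h
    rcases lt_trichotomy v w with h' | h' | h'
    · exact h'
    · subst h'; omega
    · have := csorted hn hX w v h'; omega

lemma semiTree_eq {X Y : SemiTree n k} (hpar : X.par = Y.par) (hlab : X.label = Y.label) :
    X = Y := by
  cases X; cases Y
  simp only at hpar hlab
  subst hpar; subst hlab
  rfl

lemma canon_unique {X Y : SemiTree n k} (hn : 1 ≤ n)
    (hX : IsCanon X) (hY : IsCanon Y) (h : semiTreeIso X Y) : X = Y := by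
  obtain ⟨σ, hroot, hpar, hlab⟩ := h
  have hnu : ∀ v, nu Y (σ v) = nu X v := nu_iso hn hroot hpar hlab
  have hmono : ∀ v w, v < w ↔ σ v < σ w := by
    intro v w
    rw [csorted_iff hn hX v w, csorted_iff hn hY (σ v) (σ w), hnu, hnu]
  have hid : ∀ v, σ v = v := equiv_strictMono_id σ hmono
  apply semiTree_eq
  · funext v
    have := hpar v
    rwa [hid, hid] at this
  · funext i
    have := hlab i
    rw [hid] at this
    exact Fin.castSucc_injective _ this

/-! ### From partitions to trees -/

def pm (b : Finset (Fin n)) : ℕ := b.sup Fin.val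

lemma pm_le {b : Finset (Fin n)} (hb : b.Nonempty) : pm b ≤ n - 1 := by
  apply Finset.sup_le
  intro y _
  have h1 := y.isLt
  have h2 : 1 ≤ n := by
    obtain ⟨y, _⟩ := hb
    have := y.isLt; omega
  omega

lemma pm_mem {b : Finset (Fin n)} (hb : b.Nonempty) : ∃ y ∈ b, y.val = pm b := by
  obtain ⟨y, hy, h⟩ := Finset.exists_mem_eq_sup b hb Fin.val
  exact ⟨y, hy, h.symm⟩

variable {P : Finpartition (Finset.univ : Finset (Fin n))}

lemma pm_inj {b c : Finset (Fin n)} (hb : b ∈ P.parts) (hc : c ∈ P.parts)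
    (h : pm b = pm c) : b = c := by
  obtain ⟨y, hy, hy2⟩ := pm_mem (P.nonempty_of_mem_parts hb)
  obtain ⟨z, hz, hz2⟩ := pm_mem (P.nonempty_of_mem_parts hc)
  have : y = z := Fin.ext (by omega)
  subst this
  exact P.eq_of_mem_parts hb hc hy hz

def prank (P : Finpartition (Finset.univ : Finset (Fin n))) (b : Finset (Fin n)) : ℕ :=
  (P.parts.filter (fun c => pm b < pm c)).card

lemma prank_reverse {b c : Finset (Fin n)} (hb : b ∈ P.parts) (hc : c ∈ P.parts)
    (h : pm b < pm c) : prank P c < prank P b := by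
  apply Finset.card_lt_card
  constructor
  · intro x hx
    simp only [mem_filter] at hx ⊢
    exact ⟨hx.1, lt_trans h hx.2⟩
  · intro hsub
    have := hsub (by simp only [mem_filter]; exact ⟨hc, h⟩)
    simp only [mem_filter] at this
    omega

lemma prank_inj {b c : Finset (Fin n)} (hb : b ∈ P.parts) (hc : c ∈ P.parts)
    (h : prank P b = prank P c) : b = c := by
  rcases Nat.lt_trichotomy (pm b) (pm c) with h' | h' | h'
  · exact absurd h (Nat.ne_of_gt (prank_reverse hb hc h'))
  · exact pm_inj hb hc h'
  · exact absurd h (Nat.ne_of_lt (prank_reverse hc hb h'))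

lemma prank_le {b : Finset (Fin n)} (hb : b ∈ P.parts) :
    prank P b ≤ P.parts.card - 1 := by
  have hsub : P.parts.filter (fun c => pm b < pm c) ⊆ P.parts.erase b := by
    intro c hc
    simp only [mem_filter] at hc
    rw [Finset.mem_erase]
    exact ⟨fun h => by rw [h] at hc; omega, hc.1⟩
  have := Finset.card_le_card hsub
  rwa [Finset.card_erase_of_mem hb] at this

lemma pm_add_prank {b : Finset (Fin n)} (hb : b ∈ P.parts) :
    pm b + prank P b ≤ n - 1 := by
  have hinj : Set.InjOn pm ((P.parts.filter (fun c => pm b < pm c) : Finset (Finset (Fin n))) : Set (Finset (Fin n))) := by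
    intro x hx y hy hxy
    simp only [Finset.coe_filter, Set.mem_setOf_eq] at hx hy
    exact pm_inj hx.1 hy.1 hxy
  have himg : ((P.parts.filter (fun c => pm b < pm c)).image pm).card = prank P b :=
    Finset.card_image_of_injOn hinj
  have hsub : (P.parts.filter (fun c => pm b < pm c)).image pm
      ⊆ Finset.Icc (pm b + 1) (n - 1) := by
    intro x hx
    obtain ⟨c, hc, rfl⟩ := Finset.mem_image.1 hx
    simp only [mem_filter] at hc
    rw [Finset.mem_Icc]
    exact ⟨hc.2, pm_le (P.nonempty_of_mem_parts hc.1)⟩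
  have := Finset.card_le_card hsub
  rw [himg, Nat.card_Icc] at this
  have hpmb := pm_le (P.nonempty_of_mem_parts hb)
  omega

noncomputable def tpar (P : Finpartition (Finset.univ : Finset (Fin n))) :
    Fin (n + 1) → Fin (n + 1) := fun w =>
  if h : w = Fin.last n then w else ⟨n - prank P (P.part (w.castPred h)), by omega⟩

lemma tpar_last : tpar P (Fin.last n) = Fin.last n := by rw [tpar]; simp

lemma tpar_castSucc (x : Fin n) :
    tpar P x.castSucc = ⟨n - prank P (P.part x), Nat.lt_succ_of_le (Nat.sub_le _ _)⟩ := by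
  rw [tpar, dif_neg (Fin.castSucc_lt_last x).ne]
  simp

lemma tpar_gt (x : Fin n) : x.val < (tpar P x.castSucc).val := by
  rw [tpar_castSucc]
  have hb : P.part x ∈ P.parts := P.part_mem.2 (mem_univ x)
  have hx : x ∈ P.part x := P.mem_part (mem_univ x)
  have h1 : x.val ≤ pm (P.part x) := Finset.le_sup hx
  have h2 := pm_add_prank hb
  have := x.isLt
  simp only []
  omega

lemma tpar_reach : ∀ w, ∃ m, (tpar P)^[m] w = Fin.last n := by
  suffices h : ∀ d w, n - w.val ≤ d → ∃ m, (tpar P)^[m] w = Fin.last n by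
    intro w; exact h n w (by omega)
  intro d
  induction d with
  | zero =>
    intro w hw
    have : w = Fin.last n := Fin.ext (by have := w.isLt; simp [Fin.last]; omega)
    exact ⟨0, by simpa using this⟩
  | succ d IH =>
    intro w hw
    by_cases h : w = Fin.last n
    · exact ⟨0, by simpa using h⟩
    · obtain ⟨y, rfl⟩ := Fin.exists_castSucc_eq.2 h
      have hgt := tpar_gt (P := P) y
      have hy : (y.castSucc : Fin (n+1)).val = y.val := rfl
      obtain ⟨m, hm⟩ := IH (tpar P y.castSucc) (by
        have := (tpar P y.castSucc).isLt
        omega)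
      exact ⟨m + 1, by rw [Function.iterate_succ_apply, hm]⟩

section ToTree

noncomputable def toTree (P : Finpartition (Finset.univ : Finset (Fin n)))
    (hn : 1 ≤ n) (hkn : k ≤ n) (hP : P.parts.card = n + 1 - k) : SemiTree n k where
  par := tpar P
  rootFix := tpar_last
  reach := tpar_reach
  label := fun i => ⟨i.val, lt_of_lt_of_le i.isLt hkn⟩
  labelInj := by
    intro i j h
    simp only [Fin.mk.injEq] at h
    exact Fin.ext h
  labelIsLeaf := by
    intro i w hw hq
    obtain ⟨y, rfl⟩ := Fin.exists_castSucc_eq.2 hw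
    rw [tpar_castSucc] at hq
    have hval := congrArg Fin.val hq
    have hup : prank P (P.part y) ≤ n - k := by
      have := prank_le (P.part_mem.2 (mem_univ y))
      omega
    have hik : i.val < k := i.isLt
    simp only [Fin.castSucc_mk, Fin.val] at hval  -- n - prank = i.val
    have : (Fin.castSucc ⟨i.val, lt_of_lt_of_le i.isLt hkn⟩ : Fin (n+1)).val = i.val := rfl
    omega
  leafIsLabeled := by
    intro v h
    by_cases hv : v.val < k
    · exact ⟨⟨v.val, hv⟩, Fin.ext rfl⟩
    · exfalso
      push_neg at hv
      -- rank surjectivity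
      have hsurj : ∃ b ∈ P.parts, prank P b = n - v.val := by
        have himg : P.parts.image (prank P) = Finset.range (n + 1 - k) := by
          apply Finset.eq_of_subset_of_card_le
          · intro r hr
            obtain ⟨b, hb, rfl⟩ := Finset.mem_image.1 hr
            rw [Finset.mem_range]
            have := prank_le hb
            omega
          · rw [Finset.card_range, Finset.card_image_of_injOn, hP]
            intro x hx y hy hxy
            exact prank_inj hx hy hxy
        have : n - v.val ∈ Finset.range (n + 1 - k) := by
          rw [Finset.mem_range]
          have := v.isLt
          omega
        rw [← himg] at this
        obtain ⟨b, hb, hb2⟩ := Finset.mem_image.1 this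
        exact ⟨b, hb, hb2⟩
      obtain ⟨b, hb, hbr⟩ := hsurj
      obtain ⟨x, hx⟩ := P.nonempty_of_mem_parts hb
      have hpart : P.part x = b := P.part_eq_of_mem hb hx
      apply h x.castSucc (Fin.castSucc_lt_last x).ne
      rw [tpar_castSucc, hpart, hbr]
      apply Fin.ext
      show n - (n - v.val) = v.val
      have := v.isLt
      omega

lemma toTree_blk (hn : 1 ≤ n) (hkn : k ≤ n) (hP : P.parts.card = n + 1 - k)
    {b : Finset (Fin n)} (hb : b ∈ P.parts) :
    blk (toTree P hn hkn hP) ⟨n - prank P b, by omega⟩ = b := by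
  ext y
  rw [mem_blk]
  show tpar P y.castSucc = _ ↔ _
  rw [tpar_castSucc]
  constructor
  · intro h
    have hval := congrArg Fin.val h
    simp only [] at hval
    have h1 := prank_le (P.part_mem.2 (mem_univ y))
    have h2 := prank_le hb
    have hpr : prank P (P.part y) = prank P b := by omega
    have := prank_inj (P.part_mem.2 (mem_univ y)) hb hpr
    rw [← this]
    exact P.mem_part (mem_univ y)
  · intro hy
    rw [P.part_eq_of_mem hb hy]

lemma toTree_nonleaf (hn : 1 ≤ n) (hkn : k ≤ n) (hP : P.parts.card = n + 1 - k)
    {v : Fin (n + 1)} (h : (blk (toTree P hn hkn hP) v).Nonempty) :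
    ∃ b ∈ P.parts, v = ⟨n - prank P b, by omega⟩ ∧ blk (toTree P hn hkn hP) v = b := by
  obtain ⟨y, hy⟩ := h
  have : tpar P y.castSucc = v := mem_blk.1 hy
  rw [tpar_castSucc] at this
  refine ⟨P.part y, P.part_mem.2 (mem_univ y), this.symm, ?_⟩
  rw [← this]
  exact toTree_blk hn hkn hP (P.part_mem.2 (mem_univ y))

lemma isCanon_toTree (hn : 1 ≤ n) (hkn : k ≤ n) (hP : P.parts.card = n + 1 - k) :
    IsCanon (toTree P hn hkn hP) := by
  constructor
  · intro i; rfl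
  · intro v w hv hw hvw
    obtain ⟨b, hb, rfl, hblkv⟩ := toTree_nonleaf hn hkn hP hv
    obtain ⟨c, hc, rfl, hblkw⟩ := toTree_nonleaf hn hkn hP hw
    rw [Fin.lt_def] at hvw
    simp only [] at hvw
    have h1 := prank_le hb
    have h2 := prank_le hc
    have hpr : prank P c < prank P b := by omega
    have hpm : pm b < pm c := by
      rcases Nat.lt_trichotomy (pm b) (pm c) with h' | h' | h'
      · exact h'
      · rw [pm_inj hb hc h'] at hpr; omega
      · have := prank_reverse hc hb h'; omega
    show bmax _ _ < bmax _ _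
    rw [bmax, bmax, hblkv, hblkw]
    exact hpm

end ToTree

/-! ### From trees to partitions -/

noncomputable def sib (T : SemiTree n k) : Finpartition (Finset.univ : Finset (Fin n)) where
  parts := univ.image (fun y : Fin n => blk T (T.par y.castSucc))
  supIndep := by
    rw [Finset.supIndep_iff_pairwiseDisjoint]
    intro b hb c hc hbc
    simp only [Finset.coe_image, Set.mem_image] at hb hc
    obtain ⟨y, -, rfl⟩ := hb
    obtain ⟨z, -, rfl⟩ := hc
    apply Finset.disjoint_left.2
    intro a ha ha'
    simp only [id] at ha ha'
    rw [mem_blk] at ha ha'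
    exact hbc (by rw [← ha, ← ha'])
  sup_parts := by
    apply le_antisymm
    · exact Finset.sup_le (fun b _ => Finset.subset_univ b)
    · intro a _
      have hmem : a ∈ blk T (T.par a.castSucc) := mem_blk.2 rfl
      have hm : blk T (T.par a.castSucc)
          ∈ univ.image (fun y : Fin n => blk T (T.par y.castSucc)) :=
        Finset.mem_image_of_mem _ (mem_univ a)
      exact Finset.le_sup (f := id) hm hmem
  bot_notMem := by
    intro h
    obtain ⟨y, -, hy⟩ := Finset.mem_image.1 h
    have : y ∈ blk T (T.par y.castSucc) := mem_blk.2 rfl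
    rw [hy] at this
    exact absurd this (Finset.notMem_empty y)

lemma sib_parts_desc (T : SemiTree n k) :
    (sib T).parts = (univ.filter (fun v => (blk T v).Nonempty)).image (blk T) := by
  ext b
  constructor
  · intro hb
    obtain ⟨y, -, rfl⟩ := Finset.mem_image.1 hb
    apply Finset.mem_image_of_mem
    simp only [mem_filter, mem_univ, true_and]
    exact ⟨y, mem_blk.2 rfl⟩
  · intro hb
    obtain ⟨v, hv, rfl⟩ := Finset.mem_image.1 hb
    simp only [mem_filter, mem_univ, true_and] at hv
    obtain ⟨y, hy⟩ := hv
    have : T.par y.castSucc = v := mem_blk.1 hy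
    rw [← this]
    exact Finset.mem_image_of_mem _ (mem_univ y)

lemma blk_injOn (T : SemiTree n k) : Set.InjOn (blk T)
    ((univ.filter (fun v => (blk T v).Nonempty) : Finset (Fin (n+1))) : Set (Fin (n+1))) := by
  intro v hv w hw hvw
  simp only [Finset.coe_filter, Set.mem_setOf_eq, mem_univ, true_and] at hv hw
  obtain ⟨y, hy⟩ := hv
  have hy' : y ∈ blk T w := by rw [← hvw]; exact hy
  rw [← mem_blk.1 hy, ← mem_blk.1 hy']

lemma childless_eq_image (T : SemiTree n k) (hn : 1 ≤ n) :
    univ.filter (fun v : Fin (n+1) => ¬ (blk T v).Nonempty)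
      = univ.image (fun i : Fin k => (T.label i).castSucc) := by
  ext v
  simp only [mem_filter, mem_univ, true_and, Finset.mem_image, Finset.not_nonempty_iff_eq_empty]
  constructor
  · intro hv
    have hvr : v ≠ Fin.last n := by
      intro h; rw [h] at hv; exact absurd hv (blk_root_nonempty T hn).ne_empty
    obtain ⟨u, rfl⟩ := Fin.exists_castSucc_eq.2 hvr
    obtain ⟨i, hi⟩ := blk_empty_iff.1 hv
    exact ⟨i, by rw [hi]⟩
  · rintro ⟨i, rfl⟩
    exact blk_empty_iff.2 ⟨i, rfl⟩

lemma nonleaf_card (T : SemiTree n k) (hn : 1 ≤ n) :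
    (univ.filter (fun v : Fin (n+1) => (blk T v).Nonempty)).card = n + 1 - k := by
  have hsplit := Finset.card_filter_add_card_filter_not
    (s := (univ : Finset (Fin (n+1)))) (p := fun v => (blk T v).Nonempty)
  have hch : (univ.filter (fun v : Fin (n+1) => ¬ (blk T v).Nonempty)).card = k := by
    rw [childless_eq_image T hn, Finset.card_image_of_injective _
      (fun i j h => T.labelInj (Fin.castSucc_injective _ h)), Finset.card_univ,
      Fintype.card_fin]
  rw [Finset.card_univ, Fintype.card_fin] at hsplit
  omega

lemma sib_parts_card (T : SemiTree n k) (hn : 1 ≤ n) :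
    (sib T).parts.card = n + 1 - k := by
  rw [sib_parts_desc, Finset.card_image_of_injOn (blk_injOn T), nonleaf_card T hn]

lemma sib_part_eq (T : SemiTree n k) (x : Fin n) :
    (sib T).part x = blk T (T.par x.castSucc) := by
  apply (sib T).part_eq_of_mem
  · show _ ∈ (sib T).parts
    exact Finset.mem_image_of_mem _ (mem_univ x)
  · exact mem_blk.2 rfl

lemma finpart_eq {P Q : Finpartition (Finset.univ : Finset (Fin n))}
    (h : P.parts = Q.parts) : P = Q := by
  cases P; cases Q
  simp only at h
  subst h
  rfl

/-- Round trip 1 : `sib (toTree P) = P`. -/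
lemma sib_toTree (hn : 1 ≤ n) (hkn : k ≤ n) (hP : P.parts.card = n + 1 - k) :
    sib (toTree P hn hkn hP) = P := by
  apply finpart_eq
  apply Finset.eq_of_subset_of_card_le
  · intro b hb
    rw [sib_parts_desc] at hb
    obtain ⟨v, hv, rfl⟩ := Finset.mem_image.1 hb
    simp only [mem_filter, mem_univ, true_and] at hv
    obtain ⟨y, hy⟩ := hv
    have h2 : tpar P y.castSucc = v := mem_blk.1 hy
    rw [tpar_castSucc] at h2
    rw [← h2, toTree_blk hn hkn hP (P.part_mem.2 (mem_univ y))]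
    exact P.part_mem.2 (mem_univ y)
  · rw [hP, sib_parts_card _ hn]


/-- In a canonical tree, positions `≥ k` are exactly the non-leaves. -/
lemma isCanon_nonleaf_iff {X : SemiTree n k} (hn : 1 ≤ n) (hkn : k ≤ n) (hX : IsCanon X)
    (v : Fin (n + 1)) : (blk X v).Nonempty ↔ k ≤ v.val := by
  by_cases hv : v = Fin.last n
  · subst hv
    simp only [Fin.val_last]
    exact ⟨fun _ => hkn, fun _ => blk_root_nonempty X hn⟩
  · obtain ⟨u, rfl⟩ := Fin.exists_castSucc_eq.2 hv
    rw [Fin.coe_castSucc]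
    constructor
    · intro h
      by_contra h'
      push_neg at h'
      exact h.ne_empty ((canon_blk_empty_iff hX.1 u).2 h')
    · intro h
      rw [Finset.nonempty_iff_ne_empty]
      intro h'
      have := (canon_blk_empty_iff hX.1 u).1 h'
      omega

/-- Round trip 2 : `toTree (sib X) = X` for canonical `X`. -/
lemma toTree_sib {X : SemiTree n k} (hn : 1 ≤ n) (hkn : k ≤ n) (hX : IsCanon X) :
    toTree (sib X) hn hkn (sib_parts_card X hn) = X := by
  apply semiTree_eq
  · funext w
    by_cases hw : w = Fin.last n
    · subst hw
      show tpar (sib X) (Fin.last n) = _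
      rw [tpar_last, X.rootFix]
    · obtain ⟨y, rfl⟩ := Fin.exists_castSucc_eq.2 hw
      show tpar (sib X) y.castSucc = X.par y.castSucc
      rw [tpar_castSucc, sib_part_eq]
      set p := X.par y.castSucc with hp
      have hpn : (blk X p).Nonempty := ⟨y, mem_blk.2 rfl⟩
      have hpk : k ≤ p.val := (isCanon_nonleaf_iff hn hkn hX p).1 hpn
      -- compute the rank
      have hrank : prank (sib X) (blk X p) = n - p.val := by
        rw [prank, sib_parts_desc]
        rw [Finset.filter_image]
        have hinj : Set.InjOn (blk X)
            (((univ.filter (fun v => (blk X v).Nonempty)).filter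
              (fun a => pm (blk X p) < pm (blk X a)) : Finset (Fin (n+1))) : Set (Fin (n+1))) := by
          apply Set.InjOn.mono _ (blk_injOn X)
          intro v hv
          simp only [Finset.mem_coe, Finset.mem_filter] at hv ⊢
          exact hv.1
        rw [Finset.card_image_of_injOn hinj]
        have hset : (univ.filter (fun v => (blk X v).Nonempty)).filter
            (fun a => pm (blk X p) < pm (blk X a))
            = univ.filter (fun v : Fin (n+1) => p.val < v.val) := by
          ext v
          simp only [Finset.mem_filter, mem_univ, true_and]
          constructor
          · rintro ⟨hv1, hv2⟩
            have hbm : bmax X p < bmax X v := hv2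
            by_contra h'
            push_neg at h'
            rcases Nat.eq_or_lt_of_le h' with h'' | h''
            · have : v = p := Fin.ext h''
              subst this; omega
            · have hvp : v < p := by rw [Fin.lt_def]; exact h''
              have := hX.2 v p hv1 hpn hvp
              show False
              have hb1 : bmax X v < bmax X p := this
              omega
          · intro hv
            have hvn : (blk X v).Nonempty := by
              rw [isCanon_nonleaf_iff hn hkn hX v]
              omega
            refine ⟨hvn, ?_⟩
            have hpv : p < v := by rw [Fin.lt_def]; exact hv
            exact hX.2 p v hpn hvn hpv
        rw [hset, fin_card_val_gt p.isLt]
        omega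
      rw [hrank]
      apply Fin.ext
      show n - (n - p.val) = p.val
      have := p.isLt
      omega
  · funext i
    apply Fin.ext
    show i.val = (X.label i).val
    exact (hX.1 i).symm

/-! ### Assembly -/

lemma semiTreeIso_equivalence : Equivalence (@semiTreeIso n k) where
  refl T := ⟨Equiv.refl _, rfl, fun _ => rfl, fun _ => rfl⟩
  symm := by
    rintro T T' ⟨σ, hroot, hpar, hlab⟩
    refine ⟨σ.symm, ?_, ?_, ?_⟩
    · rw [Equiv.symm_apply_eq, hroot]
    · intro v
      apply σ.injective
      rw [Equiv.apply_symm_apply, hpar, Equiv.apply_symm_apply]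
    · intro i
      apply σ.injective
      rw [Equiv.apply_symm_apply, hlab]
  trans := by
    rintro A B C ⟨σ, h1, h2, h3⟩ ⟨τ, g1, g2, g3⟩
    refine ⟨σ.trans τ, ?_, ?_, ?_⟩
    · simp only [Equiv.trans_apply, h1, g1]
    · intro v
      simp only [Equiv.trans_apply, h2, g2]
    · intro i
      simp only [Equiv.trans_apply, h3, g3]

theorem main_count (hn : 1 ≤ n) (hk : 1 ≤ k) (hkn : k ≤ n) :
    Fcount n k = Stirling n (n - k + 1) := by
  classical
  have harith : n - k + 1 = n + 1 - k := by omega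
  rw [Fcount, Stirling, harith]
  let S : Set (Finpartition (Finset.univ : Finset (Fin n))) :=
    {P | P.parts.card = n + 1 - k}
  let F : S → Quot (@semiTreeIso n k) := fun Ph =>
    Quot.mk _ (toTree Ph.1 hn hkn Ph.2)
  have hbij : Function.Bijective F := by
    constructor
    · rintro ⟨P, hP⟩ ⟨P', hP'⟩ hFF
      have hiso : semiTreeIso (toTree P hn hkn hP) (toTree P' hn hkn hP') :=
        (semiTreeIso_equivalence.eqvGen_iff).1 (Quot.eqvGen_exact hFF)
      have heq : toTree P hn hkn hP = toTree P' hn hkn hP' :=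
        canon_unique hn (isCanon_toTree hn hkn hP) (isCanon_toTree hn hkn hP') hiso
      have : P = P' := by
        rw [← sib_toTree hn hkn hP, ← sib_toTree hn hkn hP', heq]
      exact Subtype.ext this
    · intro q
      induction q using Quot.ind with
      | _ T =>
      refine ⟨⟨sib (canon T hn hkn), sib_parts_card _ hn⟩, ?_⟩
      show Quot.mk _ (toTree (sib (canon T hn hkn)) hn hkn _) = Quot.mk _ T
      rw [toTree_sib hn hkn (isCanon_canon T hn hkn)]
      exact Quot.sound (semiTreeIso_equivalence.symm (canon_iso T hn hkn))
  rw [Set.ncard_univ, ← Nat.card_coe_set_eq]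
  exact (Nat.card_congr (Equiv.ofBijective F hbij)).symm
end SemiAux

/-- The number of rooted semilabeled trees with `n` non-root vertices and `k` labeled
leaves equals the Stirling number of the second kind `S(n, n-k+1)`. -/
theorem semilabeled_trees_eq_stirling (n k : ℕ) (hn : 1 ≤ n) (hk : 1 ≤ k) (hkn : k ≤ n) :
    Fcount n k = Stirling n (n - k + 1) := by
  exact SemiAux.main_count hn hk hkn
end

section
/- The Bell numbers satisfy B_n = B*_{n+1} + B*_n for all n ≥ 1, where B*_m is the number of partitions of an m-element set with no singleton classes. -/
open Finset Polynomial

section BeckerAux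

variable {n : ℕ}

noncomputable def up (s : Finset (Fin n)) : Finset (Fin (n+1)) := s.map Fin.castSuccEmb

noncomputable def down (b : Finset (Fin (n+1))) : Finset (Fin n) :=
  b.preimage Fin.castSucc (Fin.castSucc_injective n).injOn

@[simp] lemma mem_up {s : Finset (Fin n)} {y : Fin (n+1)} :
    y ∈ up s ↔ ∃ x ∈ s, Fin.castSucc x = y := by simp [up]

@[simp] lemma mem_down {b : Finset (Fin (n+1))} {x : Fin n} :
    x ∈ down b ↔ x.castSucc ∈ b := by simp [down]

@[simp] lemma down_up (s : Finset (Fin n)) : down (up s) = s := by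
  ext x; simp [Fin.castSucc_injective n |>.eq_iff]

lemma up_down {b : Finset (Fin (n+1))} (h : Fin.last n ∉ b) : up (down b) = b := by
  ext y
  simp only [mem_up, mem_down]
  constructor
  · rintro ⟨x, hx, rfl⟩; exact hx
  · intro hy
    obtain ⟨x, rfl⟩ := Fin.eq_castSucc_of_ne_last (fun h' => h (h' ▸ hy))
    exact ⟨x, hy, rfl⟩

lemma up_card (s : Finset (Fin n)) : (up s).card = s.card := Finset.card_map _

lemma last_not_mem_up (s : Finset (Fin n)) : Fin.last n ∉ up s := by
  simp only [mem_up]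
  rintro ⟨x, _, hx⟩
  exact absurd hx (Fin.castSucc_lt_last x).ne

lemma up_injective : Function.Injective (up (n := n)) := fun s t h => by
  rw [← down_up s, h, down_up]

/-- singleton elements of P -/
noncomputable def sing (P : Finpartition (Finset.univ : Finset (Fin n))) : Finset (Fin n) :=
  Finset.univ.filter fun x => ({x} : Finset (Fin n)) ∈ P.parts

@[simp] lemma mem_sing {P : Finpartition (Finset.univ : Finset (Fin n))} {x : Fin n} :
    x ∈ sing P ↔ ({x} : Finset (Fin n)) ∈ P.parts := by simp [sing]

noncomputable def fwd (P : Finpartition (Finset.univ : Finset (Fin n))) :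
    Finpartition (Finset.univ : Finset (Fin (n+1))) where
  parts := ((P.parts.filter fun p => p.card ≠ 1).image up) ∪
    {insert (Fin.last n) (up (sing P))}
  supIndep := by
    rw [Finset.supIndep_iff_pairwiseDisjoint]
    intro a ha b hb hab
    simp only [coe_union, coe_image, coe_singleton, Set.mem_union, Set.mem_image,
      Set.mem_singleton_iff, mem_coe, mem_filter] at ha hb
    have key : ∀ p ∈ P.parts, p.card ≠ 1 →
        Disjoint (up p) (insert (Fin.last n) (up (sing P))) := by
      intro p hp hcard
      rw [Finset.disjoint_insert_right]
      refine ⟨last_not_mem_up p, ?_⟩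
      rw [Finset.disjoint_left]
      intro y hy hy'
      obtain ⟨x, hx, rfl⟩ := mem_up.1 hy
      obtain ⟨z, hz, hzx⟩ := mem_up.1 hy'
      have hzx' : z = x := Fin.castSucc_injective n hzx
      subst hzx'
      exact hcard (by rw [P.eq_of_mem_parts hp (mem_sing.1 hz) hx (mem_singleton_self z)]; simp)
    obtain ⟨p, ⟨hp, hp1⟩, rfl⟩ | rfl := ha
    · obtain ⟨q, ⟨hq, hq1⟩, rfl⟩ | rfl := hb
      · have hpq : p ≠ q := fun h => hab (by rw [h])
        exact Finset.disjoint_map _ |>.2 (P.disjoint hp hq hpq)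
      · exact key p hp hp1
    · obtain ⟨q, ⟨hq, hq1⟩, rfl⟩ | rfl := hb
      · exact (key q hq hq1).symm
      · exact absurd rfl hab
  sup_parts := by
    apply Finset.Subset.antisymm (Finset.subset_univ _)
    intro y _
    rw [Finset.mem_sup]
    by_cases hy : y = Fin.last n
    · exact ⟨insert (Fin.last n) (up (sing P)), by simp, by simp [hy]⟩
    · obtain ⟨x, rfl⟩ := Fin.eq_castSucc_of_ne_last hy
      obtain ⟨p, hp, hxp⟩ := P.exists_mem (Finset.mem_univ x)
      by_cases hc : p.card = 1
      · obtain ⟨z, rfl⟩ := Finset.card_eq_one.1 hc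
        have : x = z := Finset.mem_singleton.1 hxp
        subst this
        exact ⟨insert (Fin.last n) (up (sing P)), by simp,
          Finset.mem_insert_of_mem (mem_up.2 ⟨x, mem_sing.2 hp, rfl⟩)⟩
      · exact ⟨up p, Finset.mem_union_left _ (Finset.mem_image_of_mem _
          (Finset.mem_filter.2 ⟨hp, hc⟩)), mem_up.2 ⟨x, hxp, rfl⟩⟩
  bot_notMem := by
    simp only [bot_eq_empty, Finset.mem_union, Finset.mem_image, Finset.mem_filter,
      Finset.mem_singleton]
    rintro (⟨p, ⟨hp, _⟩, hup⟩ | h)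
    · exact (P.nonempty_of_mem_parts hp).ne_empty (by
        have := Finset.map_eq_empty.1 hup; exact this)
    · exact absurd h.symm (Finset.insert_ne_empty _ _)

lemma fwd_parts (P : Finpartition (Finset.univ : Finset (Fin n))) :
    (fwd P).parts = ((P.parts.filter fun p => p.card ≠ 1).image up) ∪
      {insert (Fin.last n) (up (sing P))} := rfl

section Bwd
variable (Q : Finpartition (Finset.univ : Finset (Fin (n+1))))

noncomputable def bigB : Finset (Fin (n+1)) := Q.part (Fin.last n)

lemma bigB_mem : bigB Q ∈ Q.parts := Q.part_mem.2 (Finset.mem_univ _)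
lemma last_mem_bigB : Fin.last n ∈ bigB Q := Q.mem_part (Finset.mem_univ _)

lemma last_not_mem_of_ne {b : Finset (Fin (n+1))} (hb : b ∈ Q.parts) (hne : b ≠ bigB Q) :
    Fin.last n ∉ b := fun h =>
  hne (Q.eq_of_mem_parts hb (bigB_mem Q) h (last_mem_bigB Q))

noncomputable def bwd : Finpartition (Finset.univ : Finset (Fin n)) where
  parts := ((Q.parts.erase (bigB Q)).image down) ∪
    ((down (bigB Q)).image fun x => ({x} : Finset (Fin n)))
  supIndep := by
    rw [Finset.supIndep_iff_pairwiseDisjoint]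
    intro a ha b hb hab
    simp only [coe_union, coe_image, Set.mem_union, Set.mem_image, mem_coe,
      mem_erase] at ha hb
    have key : ∀ b' ∈ Q.parts, b' ≠ bigB Q → ∀ x ∈ down (bigB Q),
        Disjoint (down b') ({x} : Finset (Fin n)) := by
      intro b' hb' hne x hx
      rw [Finset.disjoint_singleton_right, mem_down]
      intro hxb
      exact hne (Q.eq_of_mem_parts hb' (bigB_mem Q) hxb (mem_down.1 hx))
    obtain ⟨p, ⟨hp1, hp2⟩, rfl⟩ | ⟨x, hx, rfl⟩ := ha
    · obtain ⟨q, ⟨hq1, hq2⟩, rfl⟩ | ⟨y, hy, rfl⟩ := hb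
      · have hpq : p ≠ q := by
          rintro rfl; exact hab rfl
        show Disjoint (down p) (down q)
        rw [Finset.disjoint_left]
        intro z hz hz'
        exact Finset.disjoint_left.1 (Q.disjoint hp2 hq2 hpq) (mem_down.1 hz) (mem_down.1 hz')
      · exact key p hp2 hp1 y hy
    · obtain ⟨q, ⟨hq1, hq2⟩, rfl⟩ | ⟨y, hy, rfl⟩ := hb
      · exact (key q hq2 hq1 x hx).symm
      · have : x ≠ y := fun h => hab (by rw [h])
        simpa [Function.onFun] using this
  sup_parts := by
    apply Finset.Subset.antisymm (Finset.subset_univ _)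
    intro x _
    rw [Finset.mem_sup]
    obtain ⟨b, hb, hxb⟩ := Q.exists_mem (Finset.mem_univ x.castSucc)
    by_cases hbB : b = bigB Q
    · exact ⟨{x}, Finset.mem_union_right _ (Finset.mem_image_of_mem _
        (mem_down.2 (hbB ▸ hxb))), Finset.mem_singleton_self x⟩
    · exact ⟨down b, Finset.mem_union_left _ (Finset.mem_image_of_mem _
        (Finset.mem_erase.2 ⟨hbB, hb⟩)), mem_down.2 hxb⟩
  bot_notMem := by
    simp only [bot_eq_empty, Finset.mem_union, Finset.mem_image, Finset.mem_erase]
    rintro (⟨b, ⟨hne, hb⟩, hdown⟩ | ⟨x, _, h⟩)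
    · obtain ⟨y, hy⟩ := Q.nonempty_of_mem_parts hb
      have hyl : y ≠ Fin.last n := fun h => last_not_mem_of_ne Q hb hne (h ▸ hy)
      obtain ⟨z, rfl⟩ := Fin.eq_castSucc_of_ne_last hyl
      exact absurd (hdown ▸ mem_down.2 hy) (Finset.notMem_empty z)
    · exact absurd h (Finset.singleton_ne_empty x)

lemma bwd_parts : (bwd Q).parts = ((Q.parts.erase (bigB Q)).image down) ∪
    ((down (bigB Q)).image fun x => ({x} : Finset (Fin n))) := rfl

end Bwd

lemma up_down_general (b : Finset (Fin (n+1))) : up (down b) = b.erase (Fin.last n) := by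
  ext y
  simp only [mem_up, mem_down, Finset.mem_erase]
  constructor
  · rintro ⟨x, hx, rfl⟩
    exact ⟨(Fin.castSucc_lt_last x).ne, hx⟩
  · rintro ⟨hy, hyb⟩
    obtain ⟨x, rfl⟩ := Fin.eq_castSucc_of_ne_last hy
    exact ⟨x, hyb, rfl⟩

lemma fwd_no_singleton (P : Finpartition (Finset.univ : Finset (Fin n)))
    (hP : (sing P).Nonempty) : ∀ p ∈ (fwd P).parts, 2 ≤ p.card := by
  intro p hp
  rw [fwd_parts, Finset.mem_union, Finset.mem_image, Finset.mem_singleton] at hp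
  obtain ⟨q, hq, rfl⟩ | rfl := hp
  · rw [Finset.mem_filter] at hq
    rw [up_card]
    have h1 : 1 ≤ q.card := Finset.card_pos.2 (P.nonempty_of_mem_parts hq.1)
    omega
  · rw [Finset.card_insert_of_notMem (last_not_mem_up _), up_card]
    have := Finset.card_pos.2 hP
    omega

lemma bwd_fwd (P : Finpartition (Finset.univ : Finset (Fin n))) : bwd (fwd P) = P := by
  have hBig : bigB (fwd P) = insert (Fin.last n) (up (sing P)) :=
    (fwd P).part_eq_of_mem (by rw [fwd_parts]; exact Finset.mem_union_right _ (Finset.mem_singleton_self _))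
      (Finset.mem_insert_self _ _)
  have hdownBig : down (bigB (fwd P)) = sing P := by
    rw [hBig]
    ext x
    simp only [mem_down, Finset.mem_insert]
    constructor
    · rintro (h | h)
      · exact absurd h (Fin.castSucc_lt_last x).ne
      · obtain ⟨z, hz, hzx⟩ := mem_up.1 h
        rwa [← Fin.castSucc_injective n hzx]
    · intro h; right; exact mem_up.2 ⟨x, h, rfl⟩
  ext p
  rw [bwd_parts, Finset.mem_union, hdownBig]
  have herase : (fwd P).parts.erase (bigB (fwd P)) = (P.parts.filter fun p => p.card ≠ 1).image up := by
    rw [fwd_parts, hBig, Finset.erase_union_distrib, Finset.erase_singleton, Finset.union_empty,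
      Finset.erase_eq_of_notMem]
    rw [Finset.mem_image]
    rintro ⟨q, _, hq⟩
    exact last_not_mem_up q (hq ▸ Finset.mem_insert_self _ _)
  rw [herase, Finset.image_image]
  constructor
  · rintro (h | h)
    · rw [Finset.mem_image] at h
      obtain ⟨q, hq, rfl⟩ := h
      simpa [Function.comp, down_up] using (Finset.mem_filter.1 hq).1
    · rw [Finset.mem_image] at h
      obtain ⟨x, hx, rfl⟩ := h
      exact mem_sing.1 hx
  · intro hp
    by_cases hc : p.card = 1
    · obtain ⟨x, rfl⟩ := Finset.card_eq_one.1 hc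
      exact Or.inr (Finset.mem_image_of_mem _ (mem_sing.2 hp))
    · refine Or.inl ?_
      rw [Finset.mem_image]
      exact ⟨p, Finset.mem_filter.2 ⟨hp, hc⟩, by simp [Function.comp, down_up]⟩

lemma bwd_singleton (Q : Finpartition (Finset.univ : Finset (Fin (n+1))))
    (hQ : ∀ b ∈ Q.parts, 2 ≤ b.card) : (down (bigB Q)).Nonempty := by
  obtain ⟨y, hy, hyl⟩ := Finset.exists_mem_ne (hQ _ (bigB_mem Q)) (Fin.last n)
  obtain ⟨x, rfl⟩ := Fin.eq_castSucc_of_ne_last hyl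
  exact ⟨x, mem_down.2 hy⟩

lemma sing_bwd (Q : Finpartition (Finset.univ : Finset (Fin (n+1))))
    (hQ : ∀ b ∈ Q.parts, 2 ≤ b.card) : sing (bwd Q) = down (bigB Q) := by
  ext x
  rw [mem_sing, bwd_parts, Finset.mem_union]
  constructor
  · rintro (h | h)
    · rw [Finset.mem_image] at h
      obtain ⟨b, hb, hbx⟩ := h
      rw [Finset.mem_erase] at hb
      have hlast : Fin.last n ∉ b := last_not_mem_of_ne Q hb.2 hb.1
      have hb1 : b = {x.castSucc} := by
        rw [← up_down hlast, hbx]; rfl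
      have h2 := hQ b hb.2
      rw [hb1] at h2
      simp at h2
    · rw [Finset.mem_image] at h
      obtain ⟨y, hy, hyx⟩ := h
      have : y = x := Finset.singleton_injective hyx
      rwa [← this]
  · intro h
    exact Or.inr (Finset.mem_image_of_mem _ h)

lemma fwd_bwd (Q : Finpartition (Finset.univ : Finset (Fin (n+1))))
    (hQ : ∀ b ∈ Q.parts, 2 ≤ b.card) : fwd (bwd Q) = Q := by
  have hBig : insert (Fin.last n) (up (sing (bwd Q))) = bigB Q := by
    rw [sing_bwd Q hQ, up_down_general, Finset.insert_erase (last_mem_bigB Q)]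
  have hfilter : ((bwd Q).parts.filter fun p => p.card ≠ 1) = (Q.parts.erase (bigB Q)).image down := by
    rw [bwd_parts, Finset.filter_union]
    have h1 : (((down (bigB Q)).image fun x => ({x} : Finset (Fin n))).filter
        fun p => p.card ≠ 1) = ∅ := by
      rw [Finset.filter_eq_empty_iff]
      intro p hp
      rw [Finset.mem_image] at hp
      obtain ⟨x, _, rfl⟩ := hp
      simp
    rw [h1, Finset.union_empty, Finset.filter_eq_self]
    intro p hp
    rw [Finset.mem_image] at hp
    obtain ⟨b, hb, rfl⟩ := hp
    rw [Finset.mem_erase] at hb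
    have hlast : Fin.last n ∉ b := last_not_mem_of_ne Q hb.2 hb.1
    have : (down b).card = b.card := by rw [← up_card, up_down hlast]
    have := hQ b hb.2
    omega
  ext p
  rw [fwd_parts, hfilter, hBig, Finset.image_image, Finset.mem_union, Finset.mem_singleton]
  constructor
  · rintro (h | rfl)
    · rw [Finset.mem_image] at h
      obtain ⟨b, hb, rfl⟩ := h
      rw [Finset.mem_erase] at hb
      have hlast : Fin.last n ∉ b := last_not_mem_of_ne Q hb.2 hb.1
      simpa [Function.comp, up_down hlast] using hb.2
    · exact bigB_mem Q
  · intro hp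
    by_cases hpB : p = bigB Q
    · exact Or.inr hpB
    · refine Or.inl ?_
      rw [Finset.mem_image]
      have hlast : Fin.last n ∉ p := last_not_mem_of_ne Q hp hpB
      exact ⟨p, Finset.mem_erase.2 ⟨hpB, hp⟩, by simp [Function.comp, up_down hlast]⟩


noncomputable def becker (n : ℕ) :
    {Q : Finpartition (Finset.univ : Finset (Fin (n+1))) // ∀ p ∈ Q.parts, 2 ≤ p.card} ≃
    {P : Finpartition (Finset.univ : Finset (Fin n)) // ¬ ∀ p ∈ P.parts, 2 ≤ p.card} where
  toFun Q := ⟨bwd Q.1, by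
    intro h
    obtain ⟨x, hx⟩ := bwd_singleton Q.1 Q.2
    have hmem : ({x} : Finset (Fin n)) ∈ (bwd Q.1).parts := by
      rw [bwd_parts, Finset.mem_union]
      exact Or.inr (Finset.mem_image_of_mem _ hx)
    have := h _ hmem
    simp at this⟩
  invFun P := ⟨fwd P.1, by
    apply fwd_no_singleton
    have hP := P.2
    push_neg at hP
    obtain ⟨p, hp, hcard⟩ := hP
    have h1 : 1 ≤ p.card := Finset.card_pos.2 (P.1.nonempty_of_mem_parts hp)
    have : p.card = 1 := by omega
    obtain ⟨x, rfl⟩ := Finset.card_eq_one.1 this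
    exact ⟨x, mem_sing.2 hp⟩⟩
  left_inv Q := Subtype.ext (fwd_bwd Q.1 Q.2)
  right_inv P := Subtype.ext (bwd_fwd P.1)


end BeckerAux

/-- Becker's identity: `B_n = B*_{n+1} + B*_n` for `n ≥ 1`, where `B*` counts set
partitions with no singleton classes. -/
theorem bell_eq_bellStar_add (n : ℕ) (hn : 1 ≤ n) :
    Bell n = BellStar (n + 1) + BellStar n := by
  classical
  have hsplit := Set.ncard_add_ncard_compl
    {P : Finpartition (Finset.univ : Finset (Fin n)) | ¬ ∀ p ∈ P.parts, 2 ≤ p.card}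
    (Set.toFinite _) (Set.toFinite _)
  have hcompl : {P : Finpartition (Finset.univ : Finset (Fin n)) |
      ¬ ∀ p ∈ P.parts, 2 ≤ p.card}ᶜ =
      {P : Finpartition (Finset.univ : Finset (Fin n)) | ∀ p ∈ P.parts, 2 ≤ p.card} := by
    ext P; simp; rfl
  have h1 : Set.ncard {P : Finpartition (Finset.univ : Finset (Fin n)) |
      ¬ ∀ p ∈ P.parts, 2 ≤ p.card} = BellStar (n+1) := by
    rw [BellStar, ← Nat.card_coe_set_eq, ← Nat.card_coe_set_eq]
    exact (Nat.card_congr (becker n)).symm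
  rw [Bell, Set.ncard_univ, ← hsplit, h1, hcompl]; rfl
end

section
/- For all n ≥ 1, B*_{n+1} = Σ_{i=1}^{n} (-1)^{n-i} B_i, where B_i is the i-th Bell number and B*_m counts partitions of an m-set without singleton classes. -/
open Finset Polynomial

namespace BellAux
variable {n : ℕ}

def lf : Fin n ↪ Fin (n+1) := ⟨Fin.castSucc, Fin.castSucc_injective n⟩
def liftS (s : Finset (Fin n)) : Finset (Fin (n+1)) := s.map lf
def unliftS (B : Finset (Fin (n+1))) : Finset (Fin n) :=
  Finset.univ.filter (fun x => Fin.castSucc x ∈ B)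

@[simp] lemma mem_liftS {s : Finset (Fin n)} {y : Fin (n+1)} :
    y ∈ liftS s ↔ ∃ x ∈ s, Fin.castSucc x = y := by simp [liftS, lf]
@[simp] lemma castSucc_mem_liftS {s : Finset (Fin n)} {x : Fin n} :
    Fin.castSucc x ∈ liftS s ↔ x ∈ s := by
  simp [liftS, lf, Fin.castSucc_injective n |>.eq_iff]
@[simp] lemma mem_unliftS {B : Finset (Fin (n+1))} {x : Fin n} :
    x ∈ unliftS B ↔ Fin.castSucc x ∈ B := by simp [unliftS]
lemma last_not_mem_liftS {s : Finset (Fin n)} : Fin.last n ∉ liftS s := by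
  simp only [mem_liftS]; rintro ⟨x, -, hx⟩; exact (Fin.castSucc_lt_last x).ne hx
@[simp] lemma unliftS_liftS (s : Finset (Fin n)) : unliftS (liftS s) = s := by ext x; simp
lemma liftS_unliftS {B : Finset (Fin (n+1))} (hB : Fin.last n ∉ B) :
    liftS (unliftS B) = B := by
  ext y
  simp only [mem_liftS, mem_unliftS]
  constructor
  · rintro ⟨x, hx, rfl⟩; exact hx
  · intro hy
    rcases Fin.eq_castSucc_or_eq_last y with ⟨x, rfl⟩ | rfl
    · exact ⟨x, hy, rfl⟩
    · exact absurd hy hB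
lemma card_liftS (s : Finset (Fin n)) : (liftS s).card = s.card := Finset.card_map _
lemma liftS_injective : Function.Injective (liftS (n := n)) := fun s t h => by
  rw [← unliftS_liftS s, h, unliftS_liftS]

/-- singleton elements of `Q`. -/
def singSet (Q : Finpartition (univ : Finset (Fin n))) : Finset (Fin n) :=
  Finset.univ.filter (fun x => ({x} : Finset (Fin n)) ∈ Q.parts)

@[simp] lemma mem_singSet {Q : Finpartition (univ : Finset (Fin n))} {x : Fin n} :
    x ∈ singSet Q ↔ ({x} : Finset (Fin n)) ∈ Q.parts := by simp [singSet]

def lastBlock (Q : Finpartition (univ : Finset (Fin n))) : Finset (Fin (n+1)) :=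
  insert (Fin.last n) (liftS (singSet Q))

def phiParts (Q : Finpartition (univ : Finset (Fin n))) : Finset (Finset (Fin (n+1))) :=
  insert (lastBlock Q) ((Q.parts.filter (fun p => 2 ≤ p.card)).image liftS)

lemma last_mem_lastBlock (Q : Finpartition (univ : Finset (Fin n))) :
    Fin.last n ∈ lastBlock Q := mem_insert_self _ _

lemma lastBlock_not_mem_image (Q : Finpartition (univ : Finset (Fin n))) :
    lastBlock Q ∉ (Q.parts.filter (fun p => 2 ≤ p.card)).image liftS := by
  simp only [mem_image]
  rintro ⟨p, -, hp⟩
  exact last_not_mem_liftS (hp ▸ last_mem_lastBlock Q)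

lemma part_card_cases {Q : Finpartition (univ : Finset (Fin n))} {p : Finset (Fin n)}
    (hp : p ∈ Q.parts) : (∃ x, p = {x}) ∨ 2 ≤ p.card := by
  have hne : p ≠ ∅ := fun h => Q.bot_notMem (by rwa [h] at hp)
  rcases Nat.lt_or_ge p.card 2 with h | h
  · left
    have h1 : p.card = 1 := by
      have := Finset.card_pos.mpr (Finset.nonempty_of_ne_empty hne); omega
    exact Finset.card_eq_one.mp h1
  · exact Or.inr h

lemma phi_disjoint (Q : Finpartition (univ : Finset (Fin n))) :
    ((phiParts Q : Set (Finset (Fin (n+1))))).PairwiseDisjoint id := by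
  intro a ha b hb hab
  simp only [phiParts, coe_insert, Set.mem_insert_iff, mem_coe, mem_image,
    mem_filter] at ha hb
  have key : ∀ p ∈ Q.parts, 2 ≤ p.card → Disjoint (lastBlock Q) (liftS p) := by
    intro p hp hcard
    rw [Finset.disjoint_left]
    intro y hy hyp
    rcases Finset.mem_insert.mp hy with rfl | hy
    · exact last_not_mem_liftS hyp
    · rcases mem_liftS.mp hy with ⟨x, hx, rfl⟩
      have hxs : ({x} : Finset (Fin n)) ∈ Q.parts := mem_singSet.mp hx
      have hxp : x ∈ p := castSucc_mem_liftS.mp hyp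
      have heq : ({x} : Finset (Fin n)) = p :=
        Q.eq_of_mem_parts hxs hp (mem_singleton_self x) hxp
      simp [← heq] at hcard
  rcases ha with rfl | ⟨p, ⟨hp, hpc⟩, rfl⟩ <;> rcases hb with rfl | ⟨q, ⟨hq, hqc⟩, rfl⟩
  · exact absurd rfl hab
  · exact key q hq hqc
  · exact (key p hp hpc).symm
  · have hpq : p ≠ q := fun h => hab (by rw [h])
    exact Finset.disjoint_map _ |>.mpr (Q.disjoint hp hq hpq)

end BellAux

namespace BellAux
variable {n : ℕ}

lemma phi_sup (Q : Finpartition (univ : Finset (Fin n))) :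
    (phiParts Q).sup id = univ := by
  apply Finset.eq_univ_of_forall
  intro y
  rw [Finset.mem_sup]
  rcases Fin.eq_castSucc_or_eq_last y with ⟨x, rfl⟩ | rfl
  · obtain ⟨t, ht, hxt⟩ := Q.exists_mem (mem_univ x)
    rcases part_card_cases ht with ⟨z, rfl⟩ | h2
    · refine ⟨lastBlock Q, mem_insert_self _ _, ?_⟩
      rw [mem_singleton] at hxt; subst hxt
      exact mem_insert_of_mem (castSucc_mem_liftS.mpr (mem_singSet.mpr ht))
    · exact ⟨liftS t, mem_insert_of_mem (mem_image_of_mem _ (mem_filter.mpr ⟨ht, h2⟩)),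
        castSucc_mem_liftS.mpr hxt⟩
  · exact ⟨lastBlock Q, mem_insert_self _ _, last_mem_lastBlock Q⟩

lemma phi_not_bot (Q : Finpartition (univ : Finset (Fin n))) :
    ⊥ ∉ phiParts Q := by
  simp only [phiParts, mem_insert, mem_image, mem_filter, bot_eq_empty]
  rintro (h | ⟨p, ⟨hp, -⟩, hp2⟩)
  · exact (by simp [lastBlock] : (lastBlock Q).Nonempty).ne_empty h.symm
  · have : p.Nonempty := Q.nonempty_of_mem_parts hp
    obtain ⟨x, hx⟩ := this
    exact (by simp : ¬ (Fin.castSucc x ∈ (∅ : Finset (Fin (n+1)))))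
      (hp2 ▸ castSucc_mem_liftS.mpr hx)

def Phi (Q : Finpartition (univ : Finset (Fin n))) :
    Finpartition (univ : Finset (Fin (n+1))) where
  parts := phiParts Q
  supIndep := Finset.supIndep_iff_pairwiseDisjoint.mpr (phi_disjoint Q)
  sup_parts := phi_sup Q
  bot_notMem := phi_not_bot Q

end BellAux

namespace BellAux
variable {n : ℕ}

def psiParts (S : Finset (Finset (Fin (n+1)))) : Finset (Finset (Fin n)) :=
  (S.filter (fun B => Fin.last n ∉ B)).image unliftS ∪
  ((unliftS ((S.filter (fun B => Fin.last n ∈ B)).sup id)).image (fun x => {x}))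

lemma filter_phi_not_last (Q : Finpartition (univ : Finset (Fin n))) :
    (phiParts Q).filter (fun B => Fin.last n ∉ B) =
      (Q.parts.filter (fun p => 2 ≤ p.card)).image liftS := by
  rw [phiParts, filter_insert, if_neg (by simp [last_mem_lastBlock])]
  apply Finset.filter_true_of_mem
  intro B hB
  rcases mem_image.mp hB with ⟨p, -, rfl⟩
  exact last_not_mem_liftS

lemma filter_phi_last (Q : Finpartition (univ : Finset (Fin n))) :
    (phiParts Q).filter (fun B => Fin.last n ∈ B) = {lastBlock Q} := by
  rw [phiParts, filter_insert, if_pos (last_mem_lastBlock Q)]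
  have : ((Q.parts.filter (fun p => 2 ≤ p.card)).image liftS).filter
      (fun B => Fin.last n ∈ B) = ∅ := by
    apply Finset.filter_eq_empty_iff.mpr
    intro B hB
    rcases mem_image.mp hB with ⟨p, -, rfl⟩
    exact last_not_mem_liftS
  rw [this]
  rfl

lemma unliftS_lastBlock (Q : Finpartition (univ : Finset (Fin n))) :
    unliftS (lastBlock Q) = singSet Q := by
  ext x
  simp only [mem_unliftS, lastBlock, mem_insert]
  constructor
  · rintro (h | h)
    · exact absurd h (Fin.castSucc_lt_last x).ne
    · exact castSucc_mem_liftS.mp h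
  · exact fun h => Or.inr (castSucc_mem_liftS.mpr h)

lemma psi_phi (Q : Finpartition (univ : Finset (Fin n))) :
    psiParts (phiParts Q) = Q.parts := by
  rw [psiParts, filter_phi_not_last, filter_phi_last]
  have h1 : ((Q.parts.filter (fun p => 2 ≤ p.card)).image liftS).image unliftS =
      Q.parts.filter (fun p => 2 ≤ p.card) := by
    ext t
    simp only [Finset.image_image, mem_image, Function.comp_apply, unliftS_liftS]
    constructor
    · rintro ⟨p, hp, rfl⟩; exact hp
    · exact fun h => ⟨t, h, rfl⟩
  rw [h1, Finset.sup_singleton, id, unliftS_lastBlock]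
  ext t
  simp only [mem_union, mem_filter, mem_image, mem_singSet]
  constructor
  · rintro (⟨ht, -⟩ | ⟨x, hx, rfl⟩)
    · exact ht
    · exact hx
  · intro ht
    rcases part_card_cases ht with ⟨x, rfl⟩ | h2
    · exact Or.inr ⟨x, ht, rfl⟩
    · exact Or.inl ⟨ht, h2⟩

lemma Phi_injective : Function.Injective (Phi (n := n)) := by
  intro Q Q' h
  apply Finpartition.ext
  have : phiParts Q = phiParts Q' := congrArg Finpartition.parts h
  rw [← psi_phi Q, ← psi_phi Q', this]

end BellAux

namespace BellAux
variable {n : ℕ}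

lemma liftS_unliftS_of_mem {B : Finset (Fin (n+1))} (hB : Fin.last n ∈ B) :
    liftS (unliftS B) = B.erase (Fin.last n) := by
  ext y
  simp only [mem_liftS, mem_unliftS, mem_erase]
  constructor
  · rintro ⟨x, hx, rfl⟩
    exact ⟨(Fin.castSucc_lt_last x).ne, hx⟩
  · rintro ⟨hy, hyB⟩
    rcases Fin.eq_castSucc_or_eq_last y with ⟨x, rfl⟩ | rfl
    · exact ⟨x, hyB, rfl⟩
    · exact absurd rfl hy

lemma card_unliftS {B : Finset (Fin (n+1))} (hB : Fin.last n ∉ B) :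
    (unliftS B).card = B.card := by
  rw [← card_liftS, liftS_unliftS hB]

lemma filter_last_mem (P : Finpartition (univ : Finset (Fin (n+1)))) :
    P.parts.filter (fun B => Fin.last n ∈ B) = {P.part (Fin.last n)} := by
  ext B
  simp only [mem_filter, mem_singleton]
  constructor
  · rintro ⟨hB, hlB⟩
    exact (P.part_eq_of_mem hB hlB).symm
  · rintro rfl
    exact ⟨P.part_mem.2 (mem_univ _), P.mem_part (mem_univ _)⟩

lemma mem_psiParts {P : Finpartition (univ : Finset (Fin (n+1)))} {t : Finset (Fin n)} :
    t ∈ psiParts P.parts ↔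
      (∃ B ∈ P.parts, Fin.last n ∉ B ∧ unliftS B = t) ∨
      (∃ x, Fin.castSucc x ∈ P.part (Fin.last n) ∧ t = {x}) := by
  rw [psiParts, filter_last_mem, Finset.sup_singleton]
  simp only [mem_union, mem_image, mem_unliftS, mem_filter, id]
  constructor
  · rintro (⟨B, ⟨hB1, hB2⟩, rfl⟩ | ⟨x, hx, rfl⟩)
    · exact Or.inl ⟨B, hB1, hB2, rfl⟩
    · exact Or.inr ⟨x, hx, rfl⟩
  · rintro (⟨B, hB, hlB, rfl⟩ | ⟨x, hx, rfl⟩)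
    · exact Or.inl ⟨B, ⟨hB, hlB⟩, rfl⟩
    · exact Or.inr ⟨x, hx, rfl⟩

lemma psi_disjoint (P : Finpartition (univ : Finset (Fin (n+1)))) :
    ((psiParts P.parts : Set (Finset (Fin n)))).PairwiseDisjoint id := by
  intro a ha b hb hab
  rw [mem_coe, mem_psiParts] at ha hb
  have hpl : P.part (Fin.last n) ∈ P.parts := P.part_mem.2 (mem_univ _)
  have hll : Fin.last n ∈ P.part (Fin.last n) := P.mem_part (mem_univ _)
  have key : ∀ B ∈ P.parts, Fin.last n ∉ B → ∀ x, Fin.castSucc x ∈ P.part (Fin.last n) →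
      Disjoint (unliftS B) ({x} : Finset (Fin n)) := by
    intro B hB hlB x hx
    rw [Finset.disjoint_singleton_right, mem_unliftS]
    intro hxB
    have hne : B ≠ P.part (Fin.last n) := fun h => hlB (h ▸ hll)
    exact Finset.disjoint_left.mp (P.disjoint hB hpl hne) hxB hx
  rcases ha with ⟨B, hB, hlB, rfl⟩ | ⟨x, hx, rfl⟩ <;>
    rcases hb with ⟨B', hB', hlB', rfl⟩ | ⟨y, hy, rfl⟩
  · have hne : B ≠ B' := fun h => hab (by rw [h])
    rw [Function.onFun, id, id, Finset.disjoint_left]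
    intro z hz hz'
    exact Finset.disjoint_left.mp (P.disjoint hB hB' hne)
      (mem_unliftS.mp hz) (mem_unliftS.mp hz')
  · exact key B hB hlB y hy
  · exact (key B' hB' hlB' x hx).symm
  · have hxy : x ≠ y := fun h => hab (by rw [h])
    rw [Function.onFun, id, id, Finset.disjoint_singleton_left, mem_singleton]
    exact hxy

lemma psi_sup (P : Finpartition (univ : Finset (Fin (n+1)))) :
    (psiParts P.parts).sup id = univ := by
  apply Finset.eq_univ_of_forall
  intro x
  rw [Finset.mem_sup]
  obtain ⟨B, hB, hxB⟩ := P.exists_mem (mem_univ (Fin.castSucc x))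
  by_cases hlB : Fin.last n ∈ B
  · refine ⟨{x}, mem_psiParts.mpr (Or.inr ⟨x, ?_, rfl⟩), mem_singleton_self x⟩
    rwa [P.part_eq_of_mem hB hlB]
  · exact ⟨unliftS B, mem_psiParts.mpr (Or.inl ⟨B, hB, hlB, rfl⟩), mem_unliftS.mpr hxB⟩

lemma psi_not_bot (P : Finpartition (univ : Finset (Fin (n+1)))) :
    ⊥ ∉ psiParts P.parts := by
  rw [bot_eq_empty]
  intro h
  rcases mem_psiParts.mp h with ⟨B, hB, hlB, hBe⟩ | ⟨x, -, hx⟩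
  · have hc : B.card = 0 := by rw [← card_unliftS hlB, hBe]; rfl
    have : B = ⊥ := by rw [bot_eq_empty]; exact Finset.card_eq_zero.mp hc
    exact P.bot_notMem (this ▸ hB)
  · exact (Finset.singleton_ne_empty x) hx.symm

def Psi (P : Finpartition (univ : Finset (Fin (n+1)))) :
    Finpartition (univ : Finset (Fin n)) where
  parts := psiParts P.parts
  supIndep := Finset.supIndep_iff_pairwiseDisjoint.mpr (psi_disjoint P)
  sup_parts := psi_sup P
  bot_notMem := psi_not_bot P

end BellAux

namespace BellAux
variable {n : ℕ}

lemma Psi_parts (P : Finpartition (univ : Finset (Fin (n+1)))) :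
    (Psi P).parts = psiParts P.parts := rfl

lemma Phi_parts (Q : Finpartition (univ : Finset (Fin n))) :
    (Phi Q).parts = phiParts Q := rfl

lemma Phi_Psi (P : Finpartition (univ : Finset (Fin (n+1))))
    (h2 : ∀ B ∈ P.parts, 2 ≤ B.card) : Phi (Psi P) = P := by
  apply Finpartition.ext
  rw [Phi_parts]
  have hpl : P.part (Fin.last n) ∈ P.parts := P.part_mem.2 (mem_univ _)
  have hll : Fin.last n ∈ P.part (Fin.last n) := P.mem_part (mem_univ _)
  have hsing : singSet (Psi P) = unliftS (P.part (Fin.last n)) := by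
    ext x
    rw [mem_singSet, Psi_parts, mem_psiParts, mem_unliftS]
    constructor
    · rintro (⟨B, hB, hlB, hBx⟩ | ⟨y, hy, hxy⟩)
      · exfalso
        have hc2 := h2 B hB
        have hc1 : (unliftS B).card = 1 := by rw [hBx]; simp
        rw [card_unliftS hlB] at hc1
        omega
      · have hxy' : x = y := by simpa using hxy
        subst hxy'
        exact hy
    · intro hx
      exact Or.inr ⟨x, hx, rfl⟩
  have hlast : lastBlock (Psi P) = P.part (Fin.last n) := by
    rw [lastBlock, hsing, liftS_unliftS_of_mem hll, Finset.insert_erase hll]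
  have hbig : (((Psi P).parts.filter (fun p => 2 ≤ p.card)).image liftS)
      = P.parts.filter (fun B => Fin.last n ∉ B) := by
    ext B
    simp only [mem_image, mem_filter, Psi_parts]
    constructor
    · rintro ⟨t, ⟨ht, htc⟩, rfl⟩
      rcases mem_psiParts.mp ht with ⟨B', hB', hlB', rfl⟩ | ⟨y, -, rfl⟩
      · rw [liftS_unliftS hlB']; exact ⟨hB', hlB'⟩
      · simp at htc
    · rintro ⟨hB, hlB⟩
      refine ⟨unliftS B, ⟨mem_psiParts.mpr (Or.inl ⟨B, hB, hlB, rfl⟩), ?_⟩, liftS_unliftS hlB⟩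
      rw [card_unliftS hlB]
      exact h2 B hB
  rw [phiParts, hlast, hbig]
  ext B
  simp only [mem_insert, mem_filter]
  constructor
  · rintro (rfl | ⟨hB, -⟩)
    · exact hpl
    · exact hB
  · intro hB
    by_cases hlB : Fin.last n ∈ B
    · exact Or.inl (P.part_eq_of_mem hB hlB).symm
    · exact Or.inr ⟨hB, hlB⟩

lemma Psi_has_singleton (P : Finpartition (univ : Finset (Fin (n+1))))
    (h2 : ∀ B ∈ P.parts, 2 ≤ B.card) : ∃ x, ({x} : Finset (Fin n)) ∈ (Psi P).parts := by
  have hpl : P.part (Fin.last n) ∈ P.parts := P.part_mem.2 (mem_univ _)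
  have hll : Fin.last n ∈ P.part (Fin.last n) := P.mem_part (mem_univ _)
  have hc := h2 _ hpl
  have : ((P.part (Fin.last n)).erase (Fin.last n)).Nonempty := by
    rw [← Finset.card_pos, Finset.card_erase_of_mem hll]
    omega
  obtain ⟨y, hy⟩ := this
  rcases Fin.eq_castSucc_or_eq_last y with ⟨x, rfl⟩ | rfl
  · refine ⟨x, ?_⟩
    rw [Psi_parts, mem_psiParts]
    exact Or.inr ⟨x, Finset.mem_of_mem_erase hy, rfl⟩
  · exact absurd rfl (Finset.ne_of_mem_erase hy)

lemma Phi_all_two (Q : Finpartition (univ : Finset (Fin n)))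
    (hQ : ∃ x, ({x} : Finset (Fin n)) ∈ Q.parts) :
    ∀ p ∈ (Phi Q).parts, 2 ≤ p.card := by
  obtain ⟨x, hx⟩ := hQ
  intro p hp
  rw [Phi_parts, phiParts, mem_insert] at hp
  rcases hp with rfl | hp
  · rw [lastBlock, Finset.card_insert_of_notMem last_not_mem_liftS, card_liftS]
    have : x ∈ singSet Q := mem_singSet.mpr hx
    have : 1 ≤ (singSet Q).card := Finset.card_pos.mpr ⟨x, this⟩
    omega
  · rcases mem_image.mp hp with ⟨q, hq, rfl⟩
    rw [card_liftS]
    exact (mem_filter.mp hq).2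

lemma Phi_image :
    Phi '' {Q : Finpartition (univ : Finset (Fin n)) | ∃ x, ({x} : Finset (Fin n)) ∈ Q.parts}
      = {P : Finpartition (univ : Finset (Fin (n+1))) | ∀ p ∈ P.parts, 2 ≤ p.card} := by
  ext P
  constructor
  · rintro ⟨Q, hQ, rfl⟩
    exact Phi_all_two Q hQ
  · intro hP
    exact ⟨Psi P, Psi_has_singleton P hP, Phi_Psi P hP⟩

lemma bell_eq (n : ℕ) : Bell n = BellStar n + BellStar (n + 1) := by
  classical
  let A : Set (Finpartition (univ : Finset (Fin n))) := {Q | ∀ p ∈ Q.parts, 2 ≤ p.card}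
  have hcompl : Aᶜ = {Q : Finpartition (univ : Finset (Fin n)) |
      ∃ x, ({x} : Finset (Fin n)) ∈ Q.parts} := by
    ext Q
    simp only [Set.mem_compl_iff, Set.mem_setOf_eq, A, not_forall]
    constructor
    · rintro ⟨p, hp, hc⟩
      rcases part_card_cases hp with ⟨x, rfl⟩ | h2
      · exact ⟨x, hp⟩
      · exact absurd h2 hc
    · rintro ⟨x, hx⟩
      exact ⟨{x}, hx, by simp⟩
  have h1 : BellStar (n + 1) = Set.ncard Aᶜ := by
    rw [BellStar, ← Phi_image, hcompl, Set.ncard_image_of_injective _ Phi_injective]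
  have h2 : BellStar n = Set.ncard A := rfl
  rw [Bell, h1, h2, Set.ncard_univ, ← Set.ncard_add_ncard_compl A]

end BellAux

namespace BellAux

lemma bellStar_one : BellStar 1 = 0 := by
  rw [BellStar]
  convert Set.ncard_empty (Finpartition (Finset.univ : Finset (Fin 1)))
  ext Q
  simp only [Set.mem_setOf_eq, Set.mem_empty_iff_false, iff_false, not_forall]
  obtain ⟨t, ht, h0t⟩ := Q.exists_mem (Finset.mem_univ (0 : Fin 1))
  refine ⟨t, ⟨ht, ?_⟩⟩
  have h1 : t.card ≤ 1 :=
    le_trans (Finset.card_le_card (Q.le ht)) (by simp)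
  omega

end BellAux

/-- For `n ≥ 1`, `B*_{n+1} = Σ_{i=1}^{n} (-1)^{n-i} B_i`. -/
theorem bellStar_alternating_sum (n : ℕ) (hn : 1 ≤ n) :
    (BellStar (n + 1) : ℤ) = ∑ i ∈ Finset.Icc 1 n, (-1 : ℤ) ^ (n - i) * Bell i := by
  induction n, hn using Nat.le_induction with
  | base =>
    have h := BellAux.bell_eq 1
    rw [BellAux.bellStar_one] at h
    simp [h]
  | succ n hn ih =>
    have h := BellAux.bell_eq (n + 1)
    have hcast : (BellStar (n + 1 + 1) : ℤ) = (Bell (n + 1) : ℤ) - BellStar (n + 1) := by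
      rw [h]; push_cast; ring
    rw [hcast, ih, Finset.sum_Icc_succ_top (by omega : 1 ≤ n + 1), Nat.sub_self]
    have hc : ∀ i ∈ Finset.Icc 1 n,
        (-1 : ℤ) ^ (n + 1 - i) * Bell i = -((-1 : ℤ) ^ (n - i) * Bell i) := by
      intro i hi
      have hi' : i ≤ n := (Finset.mem_Icc.mp hi).2
      have : n + 1 - i = (n - i) + 1 := by omega
      rw [this, pow_succ]; ring
    rw [Finset.sum_congr rfl hc, Finset.sum_neg_distrib]
    ring
end

section
/- For all t ≥ 3, B_t − B_{t−1} < B*_{t+1} < B_t, where B_n is the n-th Bell number and B*_{t+1} counts partitions of a (t+1)-set without singletons. -/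
open Finset Polynomial

namespace BellAux

variable {α : Type*} [DecidableEq α]

/-- Two finpartitions of the same finset with the same `part` function are equal. -/
theorem Finpartition.ext_part {s : Finset α} {P Q : Finpartition s}
    (h : ∀ a ∈ s, P.part a = Q.part a) : P = Q := by
  ext p
  constructor
  · intro hp
    obtain ⟨a, ha⟩ := P.nonempty_of_mem_parts hp
    have has : a ∈ s := P.le hp ha
    have : P.part a = p := P.part_eq_of_mem hp ha
    rw [← this, h a has]
    exact Q.part_mem.mpr has
  · intro hp
    obtain ⟨a, ha⟩ := Q.nonempty_of_mem_parts hp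
    have has : a ∈ s := Q.le hp ha
    have : Q.part a = p := Q.part_eq_of_mem hp ha
    rw [← this, ← h a has]
    exact P.part_mem.mpr has

end BellAux

open BellAux

section Bij

open scoped Classical

variable (n : ℕ)

/-- `e` is the last element. -/
noncomputable abbrev elast : Fin (n + 1) := Fin.last n

/-- Forward setoid: from a partition of `Fin (n+1)` produce a relation on `Fin n`:
relate `x y` iff their castSuccs are in the same part not containing `e`. -/
noncomputable def fSetoid (P : Finpartition (univ : Finset (Fin (n + 1)))) : Setoid (Fin n) where
  r x y := x = y ∨ (P.part x.castSucc = P.part y.castSucc ∧ Fin.last n ∉ P.part x.castSucc)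
  iseqv := by
    constructor
    · intro x; exact Or.inl rfl
    · rintro x y (rfl | ⟨h1, h2⟩)
      · exact Or.inl rfl
      · exact Or.inr ⟨h1.symm, h1 ▸ h2⟩
    · rintro x y z (rfl | ⟨h1, h2⟩) h
      · exact h
      · rcases h with rfl | ⟨h3, h4⟩
        · exact Or.inr ⟨h1, h2⟩
        · exact Or.inr ⟨h1.trans h3, h2⟩

noncomputable def fMap (P : Finpartition (univ : Finset (Fin (n + 1)))) :
    Finpartition (univ : Finset (Fin n)) :=
  Finpartition.ofSetoid (fSetoid n P)

/-- `x` is "small" wrt `Q` if it is the last element or its predecessor's part is a singleton. -/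
def BSmall (Q : Finpartition (univ : Finset (Fin n))) (x : Fin (n + 1)) : Prop :=
  ∀ h : x ≠ Fin.last n, (Q.part (x.castPred h)).card = 1

noncomputable def gSetoid (Q : Finpartition (univ : Finset (Fin n))) : Setoid (Fin (n + 1)) where
  r x y := (BSmall n Q x ∧ BSmall n Q y) ∨
    (∃ hx : x ≠ Fin.last n, ∃ hy : y ≠ Fin.last n,
      Q.part (x.castPred hx) = Q.part (y.castPred hy) ∧ ¬ BSmall n Q x ∧ ¬ BSmall n Q y)
  iseqv := by
    constructor
    · intro x
      by_cases h : BSmall n Q x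
      · exact Or.inl ⟨h, h⟩
      · refine Or.inr ⟨?_, ?_, rfl, h, h⟩ <;>
        · rintro rfl; exact h (fun hne => absurd rfl hne)
    · rintro x y (⟨h1, h2⟩ | ⟨hx, hy, h1, h2, h3⟩)
      · exact Or.inl ⟨h2, h1⟩
      · exact Or.inr ⟨hy, hx, h1.symm, h3, h2⟩
    · rintro x y z (⟨h1, h2⟩ | ⟨hx, hy, h1, h2, h3⟩) (⟨g1, g2⟩ | ⟨gy, gz, g1, g2, g3⟩)
      · exact Or.inl ⟨h1, g2⟩
      · exact absurd h2 g2
      · exact absurd g1 h3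
      · exact Or.inr ⟨hx, gz, by rw [h1, ← g1], h2, g3⟩

noncomputable def gMap (Q : Finpartition (univ : Finset (Fin n))) :
    Finpartition (univ : Finset (Fin (n + 1))) :=
  Finpartition.ofSetoid (gSetoid n Q)

lemma mem_part_fMap (P : Finpartition (univ : Finset (Fin (n + 1)))) (a y : Fin n) :
    y ∈ (fMap n P).part a ↔
      a = y ∨ (P.part a.castSucc = P.part y.castSucc ∧ Fin.last n ∉ P.part a.castSucc) :=
  Finpartition.mem_part_ofSetoid_iff_rel

lemma mem_part_gMap (Q : Finpartition (univ : Finset (Fin n))) (x y : Fin (n + 1)) :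
    y ∈ (gMap n Q).part x ↔
      (BSmall n Q x ∧ BSmall n Q y) ∨
      (∃ hx : x ≠ Fin.last n, ∃ hy : y ≠ Fin.last n,
        Q.part (x.castPred hx) = Q.part (y.castPred hy) ∧ ¬ BSmall n Q x ∧ ¬ BSmall n Q y) :=
  Finpartition.mem_part_ofSetoid_iff_rel

lemma small_castSucc (Q : Finpartition (univ : Finset (Fin n))) (a : Fin n) :
    BSmall n Q a.castSucc ↔ (Q.part a).card = 1 := by
  constructor
  · intro h
    simpa using h (Fin.castSucc_lt_last a).ne
  · intro h hne
    simpa using h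

lemma small_last (Q : Finpartition (univ : Finset (Fin n))) : BSmall n Q (Fin.last n) :=
  fun hne => absurd rfl hne

lemma part_card_one_iff (Q : Finpartition (univ : Finset (Fin n))) (a : Fin n) :
    (Q.part a).card = 1 ↔ Q.part a = {a} := by
  constructor
  · intro h
    obtain ⟨b, hb⟩ := Finset.card_eq_one.mp h
    have := Q.mem_part (mem_univ a)
    rw [hb] at this ⊢
    simp at this
    subst this; rfl
  · intro h; rw [h]; simp

/-- f ∘ g = id -/
lemma fMap_gMap (Q : Finpartition (univ : Finset (Fin n))) : fMap n (gMap n Q) = Q := by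
  apply Finpartition.ext_part
  intro a _
  ext y
  rw [mem_part_fMap]
  have hmem : y ∈ Q.part a ↔ Q.part y = Q.part a :=
    Q.mem_part_iff_part_eq_part (mem_univ y) (mem_univ a)
  have hlast : Fin.last n ∉ (gMap n Q).part a.castSucc ↔ ¬ BSmall n Q a.castSucc := by
    rw [mem_part_gMap]
    constructor
    · intro h hs
      exact h (Or.inl ⟨hs, small_last n Q⟩)
    · rintro hs (⟨h1, _⟩ | ⟨_, hy, _⟩)
      · exact hs h1
      · exact hy rfl
  have hpeq : (gMap n Q).part a.castSucc = (gMap n Q).part y.castSucc ↔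
      y.castSucc ∈ (gMap n Q).part a.castSucc := by
    rw [(gMap n Q).mem_part_iff_part_eq_part (mem_univ _) (mem_univ _)]
    exact ⟨fun h => h.symm, fun h => h.symm⟩
  constructor
  · rintro (rfl | ⟨h1, h2⟩)
    · exact Q.mem_part (mem_univ _)
    · rw [hlast] at h2
      rw [hpeq, mem_part_gMap] at h1
      rcases h1 with ⟨hs, _⟩ | ⟨hx, hy, heq, _, _⟩
      · exact absurd hs h2
      · rw [hmem]
        simpa using heq.symm
  · intro hy
    rw [hmem] at hy
    by_cases hcard : (Q.part a).card = 1
    · left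
      have h1 : Q.part a = {a} := (part_card_one_iff n Q a).mp hcard
      have h2 : y ∈ Q.part y := Q.mem_part (mem_univ y)
      rw [hy, h1, Finset.mem_singleton] at h2
      exact h2.symm
    · right
      have hsa : ¬ BSmall n Q a.castSucc := by rw [small_castSucc]; exact hcard
      have hsy : ¬ BSmall n Q y.castSucc := by
        rw [small_castSucc]; rw [hy]; exact hcard
      refine ⟨?_, ?_⟩
      · rw [hpeq, mem_part_gMap]
        right
        exact ⟨(Fin.castSucc_lt_last a).ne, (Fin.castSucc_lt_last y).ne, by simpa using hy.symm,
          hsa, hsy⟩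
      · rw [hlast]; exact hsa

/-- For a no-singleton partition `P`, smallness wrt `fMap P` means membership in the part of
the last element. -/
lemma small_fMap (P : Finpartition (univ : Finset (Fin (n + 1))))
    (hP : ∀ p ∈ P.parts, 2 ≤ p.card) (x : Fin (n + 1)) :
    BSmall n (fMap n P) x ↔ x ∈ P.part (Fin.last n) := by
  have hlastmem : Fin.last n ∈ P.part (Fin.last n) := P.mem_part (mem_univ _)
  by_cases hx : x = Fin.last n
  · subst hx
    simp [small_last, hlastmem]
  · have hx' : x ∈ P.part (Fin.last n) ↔ Fin.last n ∈ P.part x := by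
      rw [P.mem_part_iff_part_eq_part (mem_univ _) (mem_univ _),
        P.mem_part_iff_part_eq_part (mem_univ _) (mem_univ _)]
      exact ⟨fun h => h.symm, fun h => h.symm⟩
    rw [hx']
    have hcast : (x.castPred hx).castSucc = x := Fin.castSucc_castPred x hx
    constructor
    · intro hs
      by_contra hnot
      -- part of x doesn't contain last, has card ≥ 2, produces two elements in fMap part
      have hc2 : 2 ≤ (P.part x).card := hP _ (P.part_mem.mpr (mem_univ x))
      obtain ⟨u, hu, v, hv, huv⟩ := Finset.one_lt_card.mp hc2
      have hcard1 := hs hx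
      rw [part_card_one_iff] at hcard1
      -- u, v ∈ P.part x, u ≠ v, both ≠ last
      have hune : u ≠ Fin.last n := fun h => hnot (h ▸ hu)
      have hvne : v ≠ Fin.last n := fun h => hnot (h ▸ hv)
      have humem : u.castPred hune ∈ (fMap n P).part (x.castPred hx) := by
        rw [mem_part_fMap]
        right
        rw [hcast, Fin.castSucc_castPred]
        constructor
        · exact (P.part_eq_of_mem (P.part_mem.mpr (mem_univ x)) hu).symm
        · exact hnot
      have hvmem : v.castPred hvne ∈ (fMap n P).part (x.castPred hx) := by
        rw [mem_part_fMap]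
        right
        rw [hcast, Fin.castSucc_castPred]
        constructor
        · exact (P.part_eq_of_mem (P.part_mem.mpr (mem_univ x)) hv).symm
        · exact hnot
      rw [hcard1] at humem hvmem
      simp only [Finset.mem_singleton] at humem hvmem
      exact huv (by rw [← Fin.castSucc_castPred u hune, ← Fin.castSucc_castPred v hvne,
        humem, hvmem])
    · intro hmem hne
      rw [part_card_one_iff]
      ext z
      rw [mem_part_fMap]
      simp only [Finset.mem_singleton]
      constructor
      · rintro (h | ⟨h1, h2⟩)
        · exact h.symm
        · rw [hcast] at h2
          exact absurd hmem h2
      · rintro rfl; left; rfl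

/-- g ∘ f = id on no-singleton partitions. -/
lemma gMap_fMap (P : Finpartition (univ : Finset (Fin (n + 1))))
    (hP : ∀ p ∈ P.parts, 2 ≤ p.card) : gMap n (fMap n P) = P := by
  apply Finpartition.ext_part
  intro x _
  ext y
  rw [mem_part_gMap]
  have hmem : y ∈ P.part x ↔ P.part y = P.part x :=
    P.mem_part_iff_part_eq_part (mem_univ y) (mem_univ x)
  have hsm := small_fMap n P hP
  constructor
  · rintro (⟨h1, h2⟩ | ⟨hx, hy, heq, h2, h3⟩)
    · rw [hsm] at h1 h2
      rw [hmem, P.part_eq_of_mem (P.part_mem.mpr (mem_univ _)) h2,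
        P.part_eq_of_mem (P.part_mem.mpr (mem_univ _)) h1]
    · -- parts in fMap equal
      have := ((fMap n P).mem_part_iff_part_eq_part (mem_univ (y.castPred hy))
        (mem_univ (x.castPred hx))).mpr heq.symm
      rw [mem_part_fMap] at this
      rcases this with h | ⟨h4, _⟩
      · have : x = y := by
          rw [← Fin.castSucc_castPred x hx, ← Fin.castSucc_castPred y hy, h]
        subst this
        exact P.mem_part (mem_univ x)
      · rw [Fin.castSucc_castPred, Fin.castSucc_castPred] at h4
        rw [hmem, h4]
  · intro hy
    rw [hmem] at hy
    by_cases hsx : x ∈ P.part (Fin.last n)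
    · left
      rw [hsm, hsm]
      refine ⟨hsx, ?_⟩
      have : P.part x = P.part (Fin.last n) :=
        P.part_eq_of_mem (P.part_mem.mpr (mem_univ _)) hsx
      rw [← this, ← hy]
      exact P.mem_part (mem_univ y)
    · right
      have hxlast : x ≠ Fin.last n := by
        rintro rfl; exact hsx (P.mem_part (mem_univ _))
      have hsy : y ∉ P.part (Fin.last n) := by
        intro hc
        apply hsx
        have : P.part y = P.part (Fin.last n) :=
          P.part_eq_of_mem (P.part_mem.mpr (mem_univ _)) hc
        rw [← this, hy]
        exact P.mem_part (mem_univ x)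
      have hylast : y ≠ Fin.last n := by
        rintro rfl; exact hsy (P.mem_part (mem_univ _))
      have hlx : Fin.last n ∉ P.part x := fun hc => hsx (by
        rw [P.part_eq_of_mem (P.part_mem.mpr (mem_univ x)) hc]
        exact P.mem_part (mem_univ x))
      refine ⟨hxlast, hylast, ?_, ?_, ?_⟩
      · have : y.castPred hylast ∈ (fMap n P).part (x.castPred hxlast) := by
          rw [mem_part_fMap]
          right
          rw [Fin.castSucc_castPred, Fin.castSucc_castPred]
          exact ⟨hy.symm, hlx⟩
        exact (((fMap n P).mem_part_iff_part_eq_part (mem_univ _) (mem_univ _)).mp this).symm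
      · rw [hsm]; exact hsx
      · rw [hsm]; exact hsy

end Bij

section Count

open scoped Classical

/-- The bijection between no-singleton partitions of `Fin (n+1)` and partitions of `Fin n`
having a singleton part. -/
noncomputable def bijStar (n : ℕ) :
    {P : Finpartition (univ : Finset (Fin (n + 1))) // ∀ p ∈ P.parts, 2 ≤ p.card} ≃
    {Q : Finpartition (univ : Finset (Fin n)) // ¬ ∀ p ∈ Q.parts, 2 ≤ p.card} where
  toFun P := ⟨fMap n P.1, by
    obtain ⟨P, hP⟩ := P
    intro hall
    -- the part of the last element has ≥ 2 elements, one of them ≠ last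
    have hb : 2 ≤ (P.part (Fin.last n)).card := hP _ (P.part_mem.mpr (mem_univ _))
    obtain ⟨u, hu, v, hv, huv⟩ := Finset.one_lt_card.mp hb
    have hne : u ≠ Fin.last n ∨ v ≠ Fin.last n := by
      rcases eq_or_ne u (Fin.last n) with rfl | h
      · exact Or.inr (fun h => huv h.symm)
      · exact Or.inl h
    obtain ⟨w, hw, hwne⟩ : ∃ w ∈ P.part (Fin.last n), w ≠ Fin.last n := by
      rcases hne with h | h
      · exact ⟨u, hu, h⟩
      · exact ⟨v, hv, h⟩
    have hsm : BSmall n (fMap n P) w := (small_fMap n P hP w).mpr hw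
    have h1 : ((fMap n P).part (w.castPred hwne)).card = 1 := hsm hwne
    have := hall _ ((fMap n P).part_mem.mpr (mem_univ (w.castPred hwne)))
    omega⟩
  invFun Q := ⟨gMap n Q.1, by
    obtain ⟨Q, hQ⟩ := Q
    -- Q has a singleton part
    obtain ⟨a, ha⟩ : ∃ a : Fin n, (Q.part a).card = 1 := by
      push_neg at hQ
      obtain ⟨p, hp, hcard⟩ := hQ
      obtain ⟨a, hap⟩ := Q.nonempty_of_mem_parts hp
      have h0 : p.Nonempty := ⟨a, hap⟩
      have := Finset.card_pos.mpr h0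
      refine ⟨a, ?_⟩
      rw [Q.part_eq_of_mem hp hap]
      omega
    intro p hp
    obtain ⟨x, hx⟩ := (gMap n Q).nonempty_of_mem_parts hp
    rw [← (gMap n Q).part_eq_of_mem hp hx]
    apply Finset.one_lt_card.mpr
    by_cases hsx : BSmall n Q x
    · -- both last and castSucc a are in the part of x
      have hsa : BSmall n Q a.castSucc := (small_castSucc n Q a).mpr ha
      refine ⟨Fin.last n, ?_, a.castSucc, ?_, (Fin.castSucc_lt_last a).ne'⟩
      · rw [mem_part_gMap]; exact Or.inl ⟨hsx, small_last n Q⟩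
      · rw [mem_part_gMap]; exact Or.inl ⟨hsx, hsa⟩
    · have hxlast : x ≠ Fin.last n := by
        rintro rfl; exact hsx (small_last n Q)
      have hcard : (Q.part (x.castPred hxlast)).card ≠ 1 := by
        intro hc; exact hsx (fun _ => hc)
      have hpos : 0 < (Q.part (x.castPred hxlast)).card :=
        Finset.card_pos.mpr ⟨_, Q.mem_part (mem_univ _)⟩
      have h2 : 2 ≤ (Q.part (x.castPred hxlast)).card := by omega
      obtain ⟨u, hu, v, hv, huv⟩ := Finset.one_lt_card.mp h2
      obtain ⟨w, hw, hwne⟩ : ∃ w ∈ Q.part (x.castPred hxlast), w ≠ x.castPred hxlast := by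
        rcases eq_or_ne u (x.castPred hxlast) with rfl | h
        · exact ⟨v, hv, fun hc => huv hc.symm⟩
        · exact ⟨u, hu, h⟩
      refine ⟨x, (gMap n Q).mem_part (mem_univ x), w.castSucc, ?_, ?_⟩
      · rw [mem_part_gMap]
        right
        have hpeq : Q.part (w.castSucc.castPred (Fin.castSucc_lt_last w).ne) =
            Q.part (x.castPred hxlast) := by
          simpa using Q.part_eq_of_mem (Q.part_mem.mpr (mem_univ _)) hw
        refine ⟨hxlast, (Fin.castSucc_lt_last w).ne, hpeq.symm, hsx, ?_⟩
        rw [small_castSucc]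
        rw [show Q.part w = Q.part (x.castPred hxlast) from
          Q.part_eq_of_mem (Q.part_mem.mpr (mem_univ _)) hw]
        exact hcard
      · intro hc
        subst hc
        exact hwne (by simp)⟩
  left_inv P := Subtype.ext (gMap_fMap n P.1 P.2)
  right_inv Q := Subtype.ext (fMap_gMap n Q.1)

lemma bell_rec (n : ℕ) : Bell n = BellStar n + BellStar (n + 1) := by
  classical
  rw [Bell, BellStar, BellStar]
  have h := Set.ncard_add_ncard_compl
    {P : Finpartition (univ : Finset (Fin n)) | ∀ p ∈ P.parts, 2 ≤ p.card}
  rw [Set.ncard_univ, ← h]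
  congr 1
  rw [← Nat.card_coe_set_eq, ← Nat.card_coe_set_eq]
  apply Nat.card_congr
  refine (Equiv.subtypeEquivRight ?_).trans ((bijStar n).symm.trans (Equiv.subtypeEquivRight ?_))
  · intro Q
    simp [Set.mem_compl_iff]
  · intro P
    simp

lemma bellStar_pos' (n : ℕ) (h : 2 ≤ n) : 0 < BellStar n := by
  rw [BellStar]
  rw [Set.ncard_pos (Set.toFinite _)]
  have hne : (univ : Finset (Fin n)) ≠ ⊥ := by
    simp only [bot_eq_empty, ← Finset.nonempty_iff_ne_empty]
    exact ⟨⟨0, by omega⟩, mem_univ _⟩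
  refine ⟨Finpartition.indiscrete hne, ?_⟩
  intro p hp
  simp only [Finpartition.indiscrete, Finset.mem_singleton] at hp
  subst hp
  simp only [Finset.card_univ, Fintype.card_fin]
  exact h

theorem bellStar_bounds' (t : ℕ) (ht : 3 ≤ t) :
    Bell t - Bell (t - 1) < BellStar (t + 1) ∧ BellStar (t + 1) < Bell t := by
  obtain ⟨s, rfl⟩ : ∃ s, t = s + 3 := ⟨t - 3, by omega⟩
  have e1 : Bell (s + 3) = BellStar (s + 3) + BellStar (s + 3 + 1) := bell_rec (s + 3)
  have e2 : Bell (s + 2) = BellStar (s + 2) + BellStar (s + 3) := bell_rec (s + 2)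
  have p1 : 0 < BellStar (s + 2) := bellStar_pos' _ (by omega)
  have p2 : 0 < BellStar (s + 3) := bellStar_pos' _ (by omega)
  have p3 : 0 < BellStar (s + 3 + 1) := bellStar_pos' _ (by omega)
  have hgoal : Bell (s + 3) - Bell (s + 2) < BellStar (s + 3 + 1) ∧
      BellStar (s + 3 + 1) < Bell (s + 3) := by omega
  exact hgoal

end Count

/-- For `t ≥ 3`, we have `B_t − B_{t−1} < B*_{t+1} < B_t`. -/
theorem bellStar_bounds (t : ℕ) (ht : 3 ≤ t) :
    Bell t - Bell (t - 1) < BellStar (t + 1) ∧ BellStar (t + 1) < Bell t :=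
  bellStar_bounds' t ht
end

section
/- Define polynomials S_n(x) = Σ_k S*(n,k) x^k. Then S_1(x) = 0, S_2(x) = x, and for n ≥ 3, S_n(x) = (n−1)·x·S_{n−2}(x) + x·S'_{n−1}(x). -/
open Finset Polynomial

/-- The generating polynomial `S_n(x) = Σ_k S*(n,k) x^k`. -/
noncomputable def SPoly (n : ℕ) : Polynomial ℝ :=
  ∑ k ∈ Finset.range (n + 1), Polynomial.C (SStar n k : ℝ) * Polynomial.X ^ k

namespace SPAux


variable {α : Type*} {β : Type*} [DecidableEq α] [DecidableEq β]

/-- Map a finpartition along an embedding. -/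
def embMap (f : β ↪ α) {t : Finset β} (P : Finpartition t) : Finpartition (t.map f) where
  parts := P.parts.map (Finset.mapEmbedding f).toEmbedding
  supIndep := by
    rw [Finset.supIndep_iff_pairwiseDisjoint]
    rintro a ha b hb hab
    simp only [Finset.coe_map, Set.mem_image, Finset.mem_coe,
      RelEmbedding.coe_toEmbedding, Finset.mapEmbedding_apply] at ha hb
    obtain ⟨a', ha', rfl⟩ := ha
    obtain ⟨b', hb', rfl⟩ := hb
    have hne : a' ≠ b' := by rintro rfl; exact hab rfl
    have hd := P.disjoint ha' hb' hne
    simpa [Function.onFun, Finset.disjoint_map] using hd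
  sup_parts := by
    ext x
    simp only [Finset.mem_sup, Finset.mem_map, RelEmbedding.coe_toEmbedding,
      Finset.mapEmbedding_apply, id]
    constructor
    · rintro ⟨q, ⟨p, hp, rfl⟩, hx⟩
      rw [Finset.mem_map] at hx
      obtain ⟨a, ha, rfl⟩ := hx
      exact ⟨a, (P.le hp) ha, rfl⟩
    · rintro ⟨a, ha, rfl⟩
      obtain ⟨p, hp, hap⟩ := P.exists_mem ha
      exact ⟨p.map f, ⟨p, hp, rfl⟩, Finset.mem_map_of_mem f hap⟩
  bot_notMem := by
    simp only [Finset.bot_eq_empty, Finset.mem_map, RelEmbedding.coe_toEmbedding,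
      Finset.mapEmbedding_apply]
    rintro ⟨p, hp, hpe⟩
    have := Finset.map_eq_empty.1 hpe
    rw [this] at hp
    exact P.bot_notMem hp

@[simp] lemma embMap_parts (f : β ↪ α) {t : Finset β} (P : Finpartition t) :
    (embMap f P).parts = P.parts.map (Finset.mapEmbedding f).toEmbedding := rfl

/-- Pull back a finpartition along an embedding. -/
noncomputable def embComap (f : β ↪ α) {t : Finset β} (Q : Finpartition (t.map f)) : Finpartition t where
  parts := Q.parts.image fun q => q.preimage f f.injective.injOn
  supIndep := by
    rw [Finset.supIndep_iff_pairwiseDisjoint]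
    rintro a ha b hb hab
    simp only [Finset.coe_image, Set.mem_image, Finset.mem_coe] at ha hb
    obtain ⟨a', ha', rfl⟩ := ha
    obtain ⟨b', hb', rfl⟩ := hb
    have hne : a' ≠ b' := by rintro rfl; exact hab rfl
    have hd := Q.disjoint ha' hb' hne
    simp only [Function.onFun, id] at hd ⊢
    rw [Finset.disjoint_left] at hd ⊢
    intro x hx hx'
    exact hd (Finset.mem_preimage.1 hx) (Finset.mem_preimage.1 hx')
  sup_parts := by
    ext x
    simp only [Finset.mem_sup, Finset.mem_image, id]
    constructor
    · rintro ⟨q, ⟨q', hq', rfl⟩, hx⟩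
      have : f x ∈ t.map f := (Q.le hq') (Finset.mem_preimage.1 hx)
      exact (Finset.mem_map' f).1 this
    · intro hx
      obtain ⟨q, hq, hfq⟩ := Q.exists_mem ((Finset.mem_map' f).2 hx)
      exact ⟨_, ⟨q, hq, rfl⟩, Finset.mem_preimage.2 hfq⟩
  bot_notMem := by
    simp only [Finset.bot_eq_empty, Finset.mem_image]
    rintro ⟨q, hq, hqe⟩
    obtain ⟨y, hy⟩ := Q.nonempty_of_mem_parts hq
    obtain ⟨b, _, rfl⟩ := Finset.mem_map.1 ((Q.le hq) hy)
    have : b ∈ q.preimage f f.injective.injOn := Finset.mem_preimage.2 hy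
    rw [hqe] at this
    exact absurd this (Finset.notMem_empty b)

/-- Transfer a finpartition along an embedding whose image of the base set is specified. -/
noncomputable def congrEquiv (f : β ↪ α) {t : Finset β} {s : Finset α} (h : t.map f = s) :
    Finpartition t ≃ Finpartition s where
  toFun P := (embMap f P).copy h
  invFun Q := embComap f (Q.copy h.symm)
  left_inv P := by
    apply Finpartition.ext
    show ((embMap f P).parts).image _ = P.parts
    rw [embMap_parts, Finset.map_eq_image]
    rw [Finset.image_image]
    refine Finset.image_congr (fun p _ => ?_) |>.trans Finset.image_id
    exact Finset.preimage_map f p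
  right_inv Q := by
    apply Finpartition.ext
    show ((embComap f (Q.copy h.symm)).parts).map _ = Q.parts
    rw [Finset.map_eq_image]
    show ((Q.copy h.symm).parts.image _).image _ = Q.parts
    rw [Finset.image_image]
    have : (Q.copy h.symm).parts = Q.parts := rfl
    rw [this]
    refine Finset.image_congr (fun q hq => ?_) |>.trans Finset.image_id
    simp only [Function.comp]
    have hsub : q ⊆ t.map f := by
      have := Q.le (Finset.mem_coe.1 hq)
      rw [h]; exact this
    obtain ⟨u, _, rfl⟩ := Finset.subset_map_iff.1 hsub
    rw [Finset.preimage_map]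
    rfl

@[simp] lemma congrEquiv_parts (f : β ↪ α) {t : Finset β} {s : Finset α} (h : t.map f = s)
    (P : Finpartition t) :
    (congrEquiv f h P).parts = P.parts.map (Finset.mapEmbedding f).toEmbedding := rfl

lemma congrEquiv_cond (f : β ↪ α) {t : Finset β} {s : Finset α} (h : t.map f = s)
    (P : Finpartition t) (k : ℕ) :
    ((congrEquiv f h P).parts.card = k ∧ ∀ p ∈ (congrEquiv f h P).parts, 2 ≤ p.card)
      ↔ (P.parts.card = k ∧ ∀ p ∈ P.parts, 2 ≤ p.card) := by
  rw [congrEquiv_parts]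
  constructor
  · rintro ⟨h1, h2⟩
    refine ⟨by simpa using h1, fun p hp => ?_⟩
    have := h2 (p.map f) (by simp [Finset.mapEmbedding_apply]; exact hp)
    simpa using this
  · rintro ⟨h1, h2⟩
    refine ⟨by simpa using h1, fun q hq => ?_⟩
    simp only [Finset.mem_map, RelEmbedding.coe_toEmbedding, Finset.mapEmbedding_apply] at hq
    obtain ⟨p, hp, rfl⟩ := hq
    simpa using h2 p hp

lemma count_eq [Fintype α] (s : Finset α) (k : ℕ) :
    Nat.card {P : Finpartition s // P.parts.card = k ∧ ∀ p ∈ P.parts, 2 ≤ p.card}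
      = SStar s.card k := by
  classical
  have h1 : (Finset.univ : Finset {a : α // a ∈ s}).map (Function.Embedding.subtype _) = s := by
    ext a; simp
  have h2 : (Finset.univ : Finset {a : α // a ∈ s}).map (s.equivFin).toEmbedding
      = (Finset.univ : Finset (Fin s.card)) := by
    ext a; simp
  rw [SStar, ← Nat.card_coe_set_eq]
  apply Nat.card_congr
  refine Equiv.subtypeEquiv ((congrEquiv _ h1).symm.trans (congrEquiv _ h2)) ?_
  intro P
  simp only [Set.mem_setOf_eq, Equiv.trans_apply]
  rw [congrEquiv_cond]
  have := congrEquiv_cond (Function.Embedding.subtype (· ∈ s)) h1 ((congrEquiv _ h1).symm P) k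
  rw [Equiv.apply_symm_apply] at this
  rw [← this]



variable {α : Type*} [DecidableEq α]

lemma avoid_parts_of_mem {s : Finset α} (P : Finpartition s) {b : Finset α} (hb : b ∈ P.parts) :
    (P.avoid b).parts = P.parts.erase b := by
  ext c
  rw [Finpartition.mem_avoid, Finset.mem_erase]
  constructor
  · rintro ⟨d, hd, hdb, rfl⟩
    have hdb' : d ≠ b := by rintro rfl; exact hdb le_rfl
    have hdisj : Disjoint d b := P.disjoint hd hb hdb'
    rw [Finset.sdiff_eq_self_of_disjoint hdisj]
    exact ⟨hdb', hd⟩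
  · rintro ⟨hcb, hc⟩
    have hdisj : Disjoint c b := P.disjoint hc hb hcb
    refine ⟨c, hc, fun hle => ?_, Finset.sdiff_eq_self_of_disjoint hdisj⟩
    · obtain ⟨y, hy⟩ := P.nonempty_of_mem_parts hc
      exact (Finset.disjoint_left.1 hdisj) hy (hle hy)

lemma avoid_singleton_parts {s : Finset α} (P : Finpartition s) {x : α} (hx : x ∈ s)
    (hsize : ∀ p ∈ P.parts, 2 ≤ p.card) :
    (P.avoid {x}).parts = insert ((P.part x).erase x) (P.parts.erase (P.part x)) := by
  have hpartmem : P.part x ∈ P.parts := P.part_mem.2 hx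
  have hxpart : x ∈ P.part x := P.mem_part hx
  have hnotsub : ∀ d ∈ P.parts, ¬ d ⊆ {x} := by
    intro d hd hsub
    have h1 := Finset.card_le_card hsub
    have h2 := hsize d hd
    rw [Finset.card_singleton] at h1
    omega
  ext c
  rw [Finpartition.mem_avoid, Finset.mem_insert, Finset.mem_erase]
  constructor
  · rintro ⟨d, hd, -, rfl⟩
    by_cases hdx : d = P.part x
    · subst hdx
      left
      rw [← Finset.erase_eq]
    · right
      have hxd : x ∉ d := fun hxd => hdx (P.eq_of_mem_parts hd hpartmem hxd hxpart)
      rw [← Finset.erase_eq, Finset.erase_eq_of_notMem hxd]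
      exact ⟨hdx, hd⟩
  · rintro (rfl | ⟨hcx, hc⟩)
    · exact ⟨P.part x, hpartmem, hnotsub _ hpartmem, by rw [← Finset.erase_eq]⟩
    · have hxd : x ∉ c := fun hxd => hcx (P.eq_of_mem_parts hc hpartmem hxd hxpart)
      exact ⟨c, hc, hnotsub _ hc, by rw [← Finset.erase_eq, Finset.erase_eq_of_notMem hxd]⟩

/-- Add a new element `x` to the part `q` of a finpartition. -/
def addToPart {s : Finset α} (Q : Finpartition s) {x : α} (hx : x ∉ s) {q : Finset α}
    (hq : q ∈ Q.parts) : Finpartition (insert x s) where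
  parts := insert (insert x q) (Q.parts.erase q)
  supIndep := by
    rw [Finset.supIndep_iff_pairwiseDisjoint, Finset.coe_insert]
    refine Set.PairwiseDisjoint.insert ?_ ?_
    · exact Q.disjoint.subset (by simp [Finset.erase_subset])
    · intro d hd hne
      simp only [Finset.coe_erase, Set.mem_diff, Finset.mem_coe, Set.mem_singleton_iff] at hd
      obtain ⟨hd, hdq⟩ := hd
      have hxd : x ∉ d := fun h => hx (Q.le hd h)
      have : Disjoint q d := Q.disjoint hq hd (Ne.symm hdq)
      simp only [id]
      rw [Finset.disjoint_insert_left]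
      exact ⟨hxd, this⟩
  sup_parts := by
    have h1 : q ⊔ (Q.parts.erase q).sup id = s := by
      have := Q.sup_parts
      rw [← Finset.insert_erase hq, Finset.sup_insert] at this
      exact this
    rw [Finset.sup_insert, id]
    rw [sup_eq_union, Finset.insert_union, ← sup_eq_union, h1]
  bot_notMem := by
    simp only [Finset.bot_eq_empty, Finset.mem_insert]
    rintro (h | h)
    · exact (Finset.insert_ne_empty x q) h.symm
    · exact Q.bot_notMem (Finset.mem_of_mem_erase h)

@[simp] lemma addToPart_parts {s : Finset α} (Q : Finpartition s) {x : α} (hx : x ∉ s)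
    {q : Finset α} (hq : q ∈ Q.parts) :
    (addToPart Q hx hq).parts = insert (insert x q) (Q.parts.erase q) := rfl



section Rec

variable {n k : ℕ}

/-- The element sharing the 2-element part of `x`, when it exists. -/
noncomputable def other (P : Finpartition (Finset.univ : Finset (Fin n))) (x : Fin n) : Fin n :=
  if h : ((P.part x).erase x).Nonempty then ((P.part x).erase x).min' h else x

lemma other_spec {P : Finpartition (Finset.univ : Finset (Fin n))} {x : Fin n}
    (hcard : (P.part x).card = 2) : P.part x = {x, other P x} ∧ other P x ≠ x := by
  have hx : x ∈ P.part x := P.mem_part (Finset.mem_univ x)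
  have he : ((P.part x).erase x).card = 1 := by
    rw [Finset.card_erase_of_mem hx, hcard]
  have hne : ((P.part x).erase x).Nonempty := Finset.card_pos.1 (by omega)
  have hother : other P x = ((P.part x).erase x).min' hne := by
    rw [other, dif_pos hne]
  have hmem : other P x ∈ (P.part x).erase x := hother ▸ Finset.min'_mem _ hne
  obtain ⟨a, ha⟩ := Finset.card_eq_one.1 he
  have hoa : other P x = a := by
    have := hmem; rw [ha, Finset.mem_singleton] at this; exact this
  constructor
  · rw [← Finset.insert_erase hx, ha, hoa]
  · rw [Finset.mem_erase] at hmem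
    exact hmem.1

lemma other_eq {P : Finpartition (Finset.univ : Finset (Fin n))} {x p : Fin n}
    (hpx : p ≠ x) (hpart : P.part x = {x, p}) : other P x = p := by
  have hxe : (P.part x).erase x = {p} := by
    rw [hpart]
    rw [show ({x, p} : Finset (Fin n)) = insert x {p} from rfl]
    rw [Finset.erase_insert (by simpa using Ne.symm hpx)]
  have hne : ((P.part x).erase x).Nonempty := by rw [hxe]; exact Finset.singleton_nonempty p
  rw [other, dif_pos hne]
  simp [hxe]

lemma card_A (hn : 3 ≤ n) (x : Fin n) (k : ℕ) :
    Nat.card {P : Finpartition (Finset.univ : Finset (Fin n)) //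
      (P.parts.card = k+1 ∧ ∀ p ∈ P.parts, 2 ≤ p.card) ∧ (P.part x).card = 2}
    = (n-1) * SStar (n-2) k := by
  classical
  rw [← Nat.card_congr (Equiv.sigmaFiberEquiv
    (fun P : {P : Finpartition (Finset.univ : Finset (Fin n)) //
      (P.parts.card = k+1 ∧ ∀ p ∈ P.parts, 2 ≤ p.card) ∧ (P.part x).card = 2} => other P.1 x))]
  rw [Nat.card_eq_fintype_card, Fintype.card_sigma]
  have hfibx : Fintype.card {P : {P : Finpartition (Finset.univ : Finset (Fin n)) //
      (P.parts.card = k+1 ∧ ∀ p ∈ P.parts, 2 ≤ p.card) ∧ (P.part x).card = 2} //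
        other P.1 x = x} = 0 := by
    rw [Fintype.card_eq_zero_iff]
    constructor
    rintro ⟨⟨P, hP, h2⟩, hF⟩
    exact (other_spec h2).2 hF
  have hfib : ∀ p : Fin n, p ≠ x →
      Fintype.card {P : {P : Finpartition (Finset.univ : Finset (Fin n)) //
        (P.parts.card = k+1 ∧ ∀ p ∈ P.parts, 2 ≤ p.card) ∧ (P.part x).card = 2} //
          other P.1 x = p} = SStar (n-2) k := by
    intro p hp
    have hxp2 : ({x, p} : Finset (Fin n)).card = 2 := Finset.card_pair (Ne.symm hp)
    have hb : ({x, p} : Finset (Fin n)) ≠ ⊥ := by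
      simp only [Finset.bot_eq_empty]
      exact Finset.insert_ne_empty x {p}
    have hdisj : Disjoint ((Finset.univ : Finset (Fin n)) \ {x, p}) {x, p} :=
      Finset.sdiff_disjoint
    have hsup : ((Finset.univ : Finset (Fin n)) \ {x, p}) ⊔ {x, p} = Finset.univ := by
      rw [sup_eq_union, Finset.sdiff_union_of_subset (Finset.subset_univ _)]
    have hpartmemA : ∀ (P : Finpartition (Finset.univ : Finset (Fin n))),
        (P.part x).card = 2 → other P x = p → ({x, p} : Finset (Fin n)) ∈ P.parts := by
      intro P h2 hF
      have h := (other_spec h2).1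
      rw [hF] at h
      rw [← h]
      exact P.part_mem.2 (Finset.mem_univ x)
    have hnotmem : ∀ (Q : Finpartition ((Finset.univ : Finset (Fin n)) \ {x, p})),
        ({x, p} : Finset (Fin n)) ∉ Q.parts := by
      intro Q h
      have := Q.le h (Finset.mem_insert_self x {p})
      simp at this
    rw [← Nat.card_eq_fintype_card]
    have hcount := count_eq (α := Fin n) ((Finset.univ : Finset (Fin n)) \ {x, p}) k
    have hcard2 : ((Finset.univ : Finset (Fin n)) \ {x, p}).card = n - 2 := by
      rw [Finset.card_sdiff_of_subset (Finset.subset_univ _), hxp2, Finset.card_univ, Fintype.card_fin]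
    rw [hcard2] at hcount
    rw [← hcount]
    apply Nat.card_congr
    refine
      { toFun := fun PP => ⟨PP.1.1.avoid {x, p}, ?A1, ?A2⟩
        invFun := fun QQ => ⟨⟨QQ.1.extend hb hdisj hsup, ⟨?B1, ?B2⟩, ?B3⟩, ?B4⟩
        left_inv := ?LI
        right_inv := ?RI }
    case A1 =>
      obtain ⟨⟨P, ⟨hc, hs⟩, h2⟩, hF⟩ := PP
      have hmem := hpartmemA P h2 hF
      rw [avoid_parts_of_mem _ hmem, Finset.card_erase_of_mem hmem, hc]
      omega
    case A2 =>
      obtain ⟨⟨P, ⟨hc, hs⟩, h2⟩, hF⟩ := PP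
      have hmem := hpartmemA P h2 hF
      intro q hq
      rw [avoid_parts_of_mem _ hmem] at hq
      exact hs q (Finset.mem_of_mem_erase hq)
    case B1 =>
      rw [Finpartition.card_extend, QQ.2.1]
    case B2 =>
      intro q hq
      rw [Finpartition.extend_parts, Finset.mem_insert] at hq
      rcases hq with rfl | hq
      · rw [hxp2]
      · exact QQ.2.2 q hq
    case B3 =>
      have hpart : (QQ.1.extend hb hdisj hsup).part x = {x, p} :=
        Finpartition.part_eq_of_mem _
          (by rw [Finpartition.extend_parts]; exact Finset.mem_insert_self _ _)
          (Finset.mem_insert_self x {p})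
      rw [hpart, hxp2]
    case B4 =>
      have hpart : (QQ.1.extend hb hdisj hsup).part x = {x, p} :=
        Finpartition.part_eq_of_mem _
          (by rw [Finpartition.extend_parts]; exact Finset.mem_insert_self _ _)
          (Finset.mem_insert_self x {p})
      exact other_eq hp hpart
    case LI =>
      rintro ⟨⟨P, ⟨hc, hs⟩, h2⟩, hF⟩
      have hmem := hpartmemA P h2 hF
      apply Subtype.ext
      apply Subtype.ext
      apply Finpartition.ext
      show insert ({x, p} : Finset (Fin n)) (P.avoid {x, p}).parts = P.parts
      rw [avoid_parts_of_mem _ hmem, Finset.insert_erase hmem]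
    case RI =>
      rintro ⟨Q, hQ⟩
      apply Subtype.ext
      apply Finpartition.ext
      show ((Q.extend hb hdisj hsup).avoid {x, p}).parts = Q.parts
      rw [avoid_parts_of_mem _ (by
        rw [Finpartition.extend_parts]; exact Finset.mem_insert_self _ _)]
      rw [Finpartition.extend_parts, Finset.erase_insert (hnotmem Q)]
  rw [← Finset.sum_erase_add _ _ (Finset.mem_univ x), hfibx, add_zero]
  rw [Finset.sum_congr rfl (fun p hp => hfib p (Finset.mem_erase.1 hp).1)]
  rw [Finset.sum_const, Finset.card_erase_of_mem (Finset.mem_univ x), Finset.card_univ,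
    Fintype.card_fin, smul_eq_mul]

lemma card_B (hn : 3 ≤ n) (x : Fin n) (k : ℕ) :
    Nat.card {P : Finpartition (Finset.univ : Finset (Fin n)) //
      (P.parts.card = k+1 ∧ ∀ p ∈ P.parts, 2 ≤ p.card) ∧ (P.part x).card ≠ 2}
    = (k+1) * SStar (n-1) (k+1) := by
  classical
  have hxnot : x ∉ (Finset.univ : Finset (Fin n)) \ {x} := by simp
  have hins : insert x ((Finset.univ : Finset (Fin n)) \ {x}) = Finset.univ := by
    ext y; by_cases hy : y = x <;> simp [hy]
  have key : ∀ (P : Finpartition (Finset.univ : Finset (Fin n))),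
      ((P.parts.card = k+1 ∧ ∀ p ∈ P.parts, 2 ≤ p.card) ∧ (P.part x).card ≠ 2) →
      (((P.avoid {x}).parts = insert ((P.part x).erase x) (P.parts.erase (P.part x)))
        ∧ ((P.part x).erase x ∉ P.parts.erase (P.part x))
        ∧ 2 ≤ ((P.part x).erase x).card) := by
    rintro P ⟨⟨hc, hs⟩, h2⟩
    have hpm : P.part x ∈ P.parts := P.part_mem.2 (Finset.mem_univ x)
    have h3 : 3 ≤ (P.part x).card := by have := hs _ hpm; omega
    have hxp : x ∈ P.part x := P.mem_part (Finset.mem_univ x)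
    have hq0card : 2 ≤ ((P.part x).erase x).card := by
      rw [Finset.card_erase_of_mem hxp]; omega
    refine ⟨avoid_singleton_parts P (Finset.mem_univ x) hs, ?_, hq0card⟩
    intro hmem
    rw [Finset.mem_erase] at hmem
    obtain ⟨hne, hmem⟩ := hmem
    obtain ⟨y, hy⟩ := Finset.card_pos.1 (by omega : 0 < ((P.part x).erase x).card)
    exact hne (P.eq_of_mem_parts hmem hpm hy (Finset.mem_of_mem_erase hy))
  set F : {P : Finpartition (Finset.univ : Finset (Fin n)) //
      (P.parts.card = k+1 ∧ ∀ p ∈ P.parts, 2 ≤ p.card) ∧ (P.part x).card ≠ 2}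
    → {Q : Finpartition ((Finset.univ : Finset (Fin n)) \ {x}) //
      Q.parts.card = k+1 ∧ ∀ q ∈ Q.parts, 2 ≤ q.card} := fun PP =>
    ⟨PP.1.avoid {x}, by
      obtain ⟨P, hP⟩ := PP
      obtain ⟨h1, h2, h3⟩ := key P hP
      constructor
      · rw [h1, Finset.card_insert_of_notMem h2,
          Finset.card_erase_of_mem (P.part_mem.2 (Finset.mem_univ x)), hP.1.1]
        omega
      · intro q hq
        rw [h1, Finset.mem_insert] at hq
        rcases hq with rfl | hq
        · exact h3
        · exact hP.1.2 q (Finset.mem_of_mem_erase hq)⟩ with hF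
  rw [← Nat.card_congr (Equiv.sigmaFiberEquiv F)]
  rw [Nat.card_eq_fintype_card, Fintype.card_sigma]
  have hfib : ∀ Q : {Q : Finpartition ((Finset.univ : Finset (Fin n)) \ {x}) //
      Q.parts.card = k+1 ∧ ∀ q ∈ Q.parts, 2 ≤ q.card},
      Fintype.card {P // F P = Q} = k+1 := by
    intro Q
    rw [← Nat.card_eq_fintype_card]
    have hk : Nat.card {q // q ∈ Q.1.parts} = k+1 := by
      rw [Nat.card_eq_fintype_card, Fintype.card_coe, Q.2.1]
    refine (Nat.card_congr ?_).trans hk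
    refine
      { toFun := fun PP => ⟨(PP.1.1.part x).erase x, ?T1⟩
        invFun := fun qq => ⟨⟨(addToPart Q.1 hxnot qq.2).copy hins, ⟨?I1, ?I2⟩, ?I3⟩, ?I4⟩
        left_inv := ?LI
        right_inv := ?RI }
    case T1 =>
      obtain ⟨⟨P, hP⟩, hFP⟩ := PP
      have h1 := (key P hP).1
      have hQ1 : Q.1 = P.avoid {x} := by rw [← hFP, hF]
      rw [hQ1, h1]
      exact Finset.mem_insert_self _ _
    case I1 =>
      show (insert (insert x qq.1) (Q.1.parts.erase qq.1)).card = k + 1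
      have hxq : x ∉ qq.1 := fun h => by
        have := Q.1.le qq.2 h; simp at this
      have hnot2 : insert x qq.1 ∉ Q.1.parts.erase qq.1 := fun h => by
        have := Q.1.le (Finset.mem_of_mem_erase h) (Finset.mem_insert_self x qq.1)
        simp at this
      rw [Finset.card_insert_of_notMem hnot2, Finset.card_erase_of_mem qq.2, Q.2.1]
      omega
    case I2 =>
      intro q hq
      have hxq : x ∉ qq.1 := fun h => by
        have := Q.1.le qq.2 h; simp at this
      rw [show ((addToPart Q.1 hxnot qq.2).copy hins).parts
        = insert (insert x qq.1) (Q.1.parts.erase qq.1) from rfl, Finset.mem_insert] at hq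
      rcases hq with rfl | hq
      · have := Q.2.2 qq.1 qq.2
        rw [Finset.card_insert_of_notMem hxq]
        omega
      · exact Q.2.2 q (Finset.mem_of_mem_erase hq)
    case I3 =>
      have hxq : x ∉ qq.1 := fun h => by
        have := Q.1.le qq.2 h; simp at this
      have hpart : ((addToPart Q.1 hxnot qq.2).copy hins).part x = insert x qq.1 :=
        Finpartition.part_eq_of_mem _ (Finset.mem_insert_self _ _)
          (Finset.mem_insert_self x qq.1)
      have := Q.2.2 qq.1 qq.2
      rw [hpart, Finset.card_insert_of_notMem hxq]
      omega
    case I4 =>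
      apply Subtype.ext
      show ((addToPart Q.1 hxnot qq.2).copy hins).avoid {x} = Q.1
      have hxq : x ∉ qq.1 := fun h => by
        have := Q.1.le qq.2 h; simp at this
      have hnot2 : insert x qq.1 ∉ Q.1.parts.erase qq.1 := fun h => by
        have := Q.1.le (Finset.mem_of_mem_erase h) (Finset.mem_insert_self x qq.1)
        simp at this
      have hpart : ((addToPart Q.1 hxnot qq.2).copy hins).part x = insert x qq.1 :=
        Finpartition.part_eq_of_mem _ (Finset.mem_insert_self _ _)
          (Finset.mem_insert_self x qq.1)
      have hsizes : ∀ p ∈ ((addToPart Q.1 hxnot qq.2).copy hins).parts, 2 ≤ p.card := by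
        intro q hq
        rw [show ((addToPart Q.1 hxnot qq.2).copy hins).parts
          = insert (insert x qq.1) (Q.1.parts.erase qq.1) from rfl, Finset.mem_insert] at hq
        rcases hq with rfl | hq
        · have := Q.2.2 qq.1 qq.2
          rw [Finset.card_insert_of_notMem hxq]
          omega
        · exact Q.2.2 q (Finset.mem_of_mem_erase hq)
      apply Finpartition.ext
      rw [avoid_singleton_parts _ (Finset.mem_univ x) hsizes, hpart,
        Finset.erase_insert hxq]
      rw [show ((addToPart Q.1 hxnot qq.2).copy hins).parts
        = insert (insert x qq.1) (Q.1.parts.erase qq.1) from rfl]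
      rw [Finset.erase_insert hnot2, Finset.insert_erase qq.2]
    case LI =>
      rintro ⟨⟨P, hP⟩, hFP⟩
      obtain ⟨h1, h2, h3⟩ := key P hP
      have hxp : x ∈ P.part x := P.mem_part (Finset.mem_univ x)
      have hQ1 : Q.1 = P.avoid {x} := by rw [← hFP, hF]
      apply Subtype.ext
      apply Subtype.ext
      apply Finpartition.ext
      show insert (insert x ((P.part x).erase x)) (Q.1.parts.erase ((P.part x).erase x))
        = P.parts
      rw [hQ1, h1, Finset.erase_insert h2, Finset.insert_erase hxp,
        Finset.insert_erase (P.part_mem.2 (Finset.mem_univ x))]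
    case RI =>
      rintro ⟨q, hq⟩
      have hxq : x ∉ q := fun h => by
        have := Q.1.le hq h; simp at this
      apply Subtype.ext
      show (((addToPart Q.1 hxnot hq).copy hins).part x).erase x = q
      have hpart : ((addToPart Q.1 hxnot hq).copy hins).part x = insert x q :=
        Finpartition.part_eq_of_mem _ (Finset.mem_insert_self _ _)
          (Finset.mem_insert_self x q)
      rw [hpart, Finset.erase_insert hxq]
  rw [Finset.sum_congr rfl (fun Q _ => hfib Q), Finset.sum_const, smul_eq_mul,
    Finset.card_univ, mul_comm]
  congr 1
  have hcount := count_eq (α := Fin n) ((Finset.univ : Finset (Fin n)) \ {x}) (k+1)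
  have hcard1 : ((Finset.univ : Finset (Fin n)) \ {x}).card = n - 1 := by
    rw [Finset.card_sdiff_of_subset (Finset.subset_univ _), Finset.card_singleton, Finset.card_univ,
      Fintype.card_fin]
  rw [hcard1] at hcount
  rw [← hcount, Nat.card_eq_fintype_card]

lemma sstar_rec (hn : 3 ≤ n) (k : ℕ) :
    SStar n (k+1) = (n-1) * SStar (n-2) k + (k+1) * SStar (n-1) (k+1) := by
  classical
  have hx : (0 : ℕ) < n := by omega
  let x : Fin n := ⟨0, hx⟩
  rw [SStar]
  have hunion : {P : Finpartition (Finset.univ : Finset (Fin n)) |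
      P.parts.card = k+1 ∧ ∀ p ∈ P.parts, 2 ≤ p.card}
    = {P : Finpartition (Finset.univ : Finset (Fin n)) |
        (P.parts.card = k+1 ∧ ∀ p ∈ P.parts, 2 ≤ p.card) ∧ (P.part x).card = 2}
      ∪ {P : Finpartition (Finset.univ : Finset (Fin n)) |
        (P.parts.card = k+1 ∧ ∀ p ∈ P.parts, 2 ≤ p.card) ∧ (P.part x).card ≠ 2} := by
    ext P
    simp only [Set.mem_setOf_eq, Set.mem_union]
    tauto
  rw [hunion, Set.ncard_union_eq ?hd (Set.toFinite _) (Set.toFinite _)]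
  case hd =>
    rw [Set.disjoint_left]
    rintro P ⟨-, h2⟩ ⟨-, h3⟩
    exact h3 h2
  rw [← Nat.card_coe_set_eq, ← Nat.card_coe_set_eq]
  have eA : Nat.card ↥{P : Finpartition (Finset.univ : Finset (Fin n)) |
      (P.parts.card = k+1 ∧ ∀ p ∈ P.parts, 2 ≤ p.card) ∧ (P.part x).card = 2}
      = (n-1) * SStar (n-2) k := by
    rw [← card_A hn x k]
    exact Nat.card_congr (Equiv.subtypeEquivRight fun P => Iff.rfl)
  have eB : Nat.card ↥{P : Finpartition (Finset.univ : Finset (Fin n)) |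
      (P.parts.card = k+1 ∧ ∀ p ∈ P.parts, 2 ≤ p.card) ∧ (P.part x).card ≠ 2}
      = (k+1) * SStar (n-1) (k+1) := by
    rw [← card_B hn x k]
    exact Nat.card_congr (Equiv.subtypeEquivRight fun P => Iff.rfl)
  rw [eA, eB]

lemma sstar_zero (hn : 1 ≤ n) : SStar n 0 = 0 := by
  have hne : Nonempty (Fin n) := ⟨⟨0, by omega⟩⟩
  rw [SStar]
  have hemp : {P : Finpartition (Finset.univ : Finset (Fin n)) |
      P.parts.card = 0 ∧ ∀ p ∈ P.parts, 2 ≤ p.card} = ∅ := by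
    apply Set.eq_empty_iff_forall_notMem.2
    rintro P ⟨h1, -⟩
    have hnonempty : P.parts.Nonempty := P.parts_nonempty (by
      simp only [Finset.bot_eq_empty]
      exact Finset.univ_nonempty.ne_empty)
    rw [Finset.card_eq_zero.1 h1] at hnonempty
    exact Finset.not_nonempty_empty hnonempty
  rw [hemp, Set.ncard_empty]

lemma sstar_small {m : ℕ} (h : n < 2 * m) : SStar n m = 0 := by
  rw [SStar]
  have hemp : {P : Finpartition (Finset.univ : Finset (Fin n)) |
      P.parts.card = m ∧ ∀ p ∈ P.parts, 2 ≤ p.card} = ∅ := by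
    apply Set.eq_empty_iff_forall_notMem.2
    rintro P ⟨h1, h2⟩
    have hsum := P.sum_card_parts
    have hle := Finset.card_nsmul_le_sum P.parts (fun p => p.card) 2 h2
    rw [h1, smul_eq_mul] at hle
    rw [Finset.card_univ, Fintype.card_fin] at hsum
    omega
  rw [hemp, Set.ncard_empty]

lemma sstar_gt {m : ℕ} (h : n < m) : SStar n m = 0 := by
  rw [SStar]
  have hemp : {P : Finpartition (Finset.univ : Finset (Fin n)) |
      P.parts.card = m ∧ ∀ p ∈ P.parts, 2 ≤ p.card} = ∅ := by
    apply Set.eq_empty_iff_forall_notMem.2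
    rintro P ⟨h1, -⟩
    have hle := P.card_parts_le_card
    rw [Finset.card_univ, Fintype.card_fin, h1] at hle
    omega
  rw [hemp, Set.ncard_empty]

lemma sstar_two_one : SStar 2 1 = 1 := by
  have hne : (Finset.univ : Finset (Fin 2)) ≠ ⊥ := by
    simp only [Finset.bot_eq_empty]
    exact Finset.univ_nonempty.ne_empty
  rw [SStar]
  have hset : {P : Finpartition (Finset.univ : Finset (Fin 2)) |
      P.parts.card = 1 ∧ ∀ p ∈ P.parts, 2 ≤ p.card}
      = {Finpartition.indiscrete hne} := by
    ext P
    simp only [Set.mem_setOf_eq, Set.mem_singleton_iff]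
    constructor
    · rintro ⟨h1, -⟩
      obtain ⟨t, ht⟩ := Finset.card_eq_one.1 h1
      have hsup := P.sup_parts
      rw [ht, Finset.sup_singleton, id] at hsup
      apply Finpartition.ext
      show P.parts = {Finset.univ}
      rw [ht, hsup]
    · rintro rfl
      refine ⟨rfl, ?_⟩
      intro p hp
      rw [show (Finpartition.indiscrete hne).parts = {Finset.univ} from rfl,
        Finset.mem_singleton] at hp
      subst hp
      rw [Finset.card_univ, Fintype.card_fin]
  rw [hset, Set.ncard_singleton]

lemma coeff_SPoly (n m : ℕ) : (SPoly n).coeff m = (SStar n m : ℝ) := by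
  rw [SPoly, Polynomial.finset_sum_coeff]
  simp only [Polynomial.coeff_C_mul, Polynomial.coeff_X_pow, mul_ite, mul_one, mul_zero]
  rw [Finset.sum_ite_eq (Finset.range (n+1)) m (fun j => (SStar n j : ℝ))]
  by_cases hm : m ∈ Finset.range (n+1)
  · rw [if_pos hm]
  · rw [if_neg hm]
    rw [Finset.mem_range] at hm
    rw [sstar_gt (by omega), Nat.cast_zero]

end Rec

end SPAux

/-- `S_1(x) = 0`, `S_2(x) = x`, and for `n ≥ 3`,
`S_n(x) = (n−1)·x·S_{n−2}(x) + x·S'_{n−1}(x)`. -/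
theorem sPoly_recurrence :
    SPoly 1 = 0 ∧ SPoly 2 = Polynomial.X ∧
    ∀ n : ℕ, 3 ≤ n →
      SPoly n = Polynomial.C ((n : ℝ) - 1) * Polynomial.X * SPoly (n - 2) +
        Polynomial.X * Polynomial.derivative (SPoly (n - 1)) := by
  refine ⟨?_, ?_, ?_⟩
  · apply Polynomial.ext
    intro m
    rw [SPAux.coeff_SPoly, Polynomial.coeff_zero]
    have : SStar 1 m = 0 := by
      rcases m with _ | m
      · exact SPAux.sstar_zero le_rfl
      · exact SPAux.sstar_small (by omega)
    rw [this, Nat.cast_zero]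
  · apply Polynomial.ext
    intro m
    rw [SPAux.coeff_SPoly, Polynomial.coeff_X]
    rcases m with _ | _ | m
    · rw [SPAux.sstar_zero (by omega), if_neg (by omega), Nat.cast_zero]
    · rw [SPAux.sstar_two_one, if_pos rfl, Nat.cast_one]
    · rw [SPAux.sstar_small (by omega), if_neg (by omega), Nat.cast_zero]
  · intro n hn
    apply Polynomial.ext
    intro m
    rw [Polynomial.coeff_add, SPAux.coeff_SPoly, mul_assoc, Polynomial.coeff_C_mul]
    rcases m with _ | k
    · rw [Polynomial.mul_coeff_zero, Polynomial.mul_coeff_zero, Polynomial.coeff_X_zero,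
        SPAux.sstar_zero (by omega)]
      simp
    · rw [Polynomial.coeff_X_mul, Polynomial.coeff_X_mul, SPAux.coeff_SPoly,
        Polynomial.coeff_derivative, SPAux.coeff_SPoly, SPAux.sstar_rec hn k]
      push_cast [Nat.cast_sub (show 1 ≤ n by omega)]
      ring
end
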